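/- Let I be a subinterval of [0,1), let K be the smallest interval in 𝐊 containing I, and set J := K^m. There exists a constant C(p) > 0, depending only on p and independent of k, of I, and of the choices of the intervals I(J'), such that: (a) if I ∩ J = ∅, then ⟨w_k⟩_I ≤ ⟨w_k⟩_{I(J)} and ⟨σ_k⟩_I ≤ ⟨σ_k⟩_{I(J)}; (b) if I intersects J but does not intersect I(J), then ⟨w_k⟩_I ≤ C(p)⟨w_k⟩_K and ⟨σ_k⟩_I ≤ C(p)⟨σ_k⟩_K; (c) if I intersects both J and I(J), then ⟨w_k⟩_I ≤ C(p)⟨w_k⟩_{I(J)} and ⟨σ_k⟩_I ≤ C(p)·max(|I ∩ I(J)|/|I| , 3^{−k})·⟨σ_k⟩_{I(J)} ≤ C(p)·(|I(J)|/|I|)·⟨σ_k⟩_{I(J)}. -/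

import Mathlib

open MeasureTheory Set Filter
open scoped ENNReal Topology

noncomputable section

namespace RTpaper

/-- The half-open interval `[a, b)` represented by the pair `(a, b)`. -/
def ivSet (I : ℝ × ℝ) : Set ℝ := Set.Ico I.1 I.2

/-- The length of the interval represented by `I`. -/
def len (I : ℝ × ℝ) : ℝ := I.2 - I.1

/-- The middle triadic child of an interval. -/
def mid (I : ℝ × ℝ) : ℝ × ℝ := (I.1 + (I.2 - I.1) / 3, I.2 - (I.2 - I.1) / 3)

/-- The families `𝐊ᵢ` of the Reguera–Thiele construction. -/
def Kfam (k : ℕ) : ℕ → Set (ℝ × ℝ)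
  | 0 => {((0 : ℝ), (1 : ℝ))}
  | (i + 1) =>
      {I | ∃ K ∈ Kfam k i, ∃ j : ℕ, j < 3 ^ (k - 1) ∧
        I = ((mid K).1 + (j : ℝ) * ((3 : ℝ) ^ (1 - (k : ℤ)) * len (mid K)),
             (mid K).1 + ((j : ℝ) + 1) * ((3 : ℝ) ^ (1 - (k : ℤ)) * len (mid K)))}

/-- The families `𝐉ᵢ` (of interest for `i ≥ 1`). -/
def Jfam (k i : ℕ) : Set (ℝ × ℝ) := {J | ∃ K ∈ Kfam k (i - 1), J = mid K}

/-- The family `𝐊 = ⋃ᵢ 𝐊ᵢ`. -/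
def KK (k : ℕ) : Set (ℝ × ℝ) := ⋃ i, Kfam k i

/-- The family `𝐉 = ⋃_{i ≥ 1} 𝐉ᵢ`. -/
def JJ (k : ℕ) : Set (ℝ × ℝ) := ⋃ i, Jfam k (i + 1)

/-- The chosen triadic interval `I(J)` adjacent to `J` of length `3^{1-k}|J|`, encoded by a
choice function `ch` deciding, for each `J`, whether `I(J)` lies to the right (`true`) or to
the left (`false`) of `J`. -/
def IJ (k : ℕ) (ch : ℝ × ℝ → Bool) (J : ℝ × ℝ) : ℝ × ℝ :=
  if ch J then (J.2, J.2 + (3 : ℝ) ^ (1 - (k : ℤ)) * len J)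
  else (J.1 - (3 : ℝ) ^ (1 - (k : ℤ)) * len J, J.1)

/-- The weight `w_k = Σ_{i ≥ 1} Σ_{J ∈ 𝐉ᵢ} (3^k/(3^{k-1}+1))^i · 1_{I(J)}`. -/
def wgt (k : ℕ) (ch : ℝ × ℝ → Bool) (x : ℝ) : ℝ :=
  ∑' i : ℕ, ∑' J : ↥(Jfam k (i + 1)),
    Set.indicator (ivSet (IJ k ch (J : ℝ × ℝ)))
      (fun _ => ((3 : ℝ) ^ k / ((3 : ℝ) ^ (k - 1) + 1)) ^ (i + 1)) x

/-- The weight `σ_k = w_k^{1-p}` on `{w_k > 0}`, and `0` elsewhere. -/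
def sgm (p : ℝ) (k : ℕ) (ch : ℝ × ℝ → Bool) (x : ℝ) : ℝ :=
  if 0 < wgt k ch x then wgt k ch x ^ (1 - p) else 0

/-- `u(I) = ∫_I u`. -/
def mass (u : ℝ → ℝ) (I : ℝ × ℝ) : ℝ := ∫ x in ivSet I, u x

/-- `⟨u⟩_I = u(I)/|I|`. -/
def avg (u : ℝ → ℝ) (I : ℝ × ℝ) : ℝ := mass u I / len I

/-- `ch_𝐊(K)`: the members of `𝐊_{i+1}` contained in `K ∈ 𝐊ᵢ`. -/
def chK (k : ℕ) (K : ℝ × ℝ) : Set (ℝ × ℝ) :=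
  {K' | ∃ i, K ∈ Kfam k i ∧ K' ∈ Kfam k (i + 1) ∧ ivSet K' ⊆ ivSet K}

/-- Triadic intervals of `ℝ`. -/
def IsTriadic (I : ℝ × ℝ) : Prop :=
  ∃ n j : ℤ, I.1 = (j : ℝ) * (3 : ℝ) ^ (-n) ∧ I.2 = ((j : ℝ) + 1) * (3 : ℝ) ^ (-n)

/-- Maximal members of `S` strictly contained in `R`. -/
def maxIn (S : Set (ℝ × ℝ)) (R : ℝ × ℝ) : Set (ℝ × ℝ) :=
  {Q | Q ∈ S ∧ ivSet Q ⊂ ivSet R ∧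
    ∀ Q' ∈ S, ivSet Q ⊆ ivSet Q' → ivSet Q' ⊂ ivSet R → ivSet Q' = ivSet Q}

/-- Martingale `ε`-sparse families of (half-open) intervals. -/
def MSparse (ε : ℝ) (S : Set (ℝ × ℝ)) : Prop :=
  S.Countable ∧ (∀ I ∈ S, I.1 < I.2) ∧
    (∀ I ∈ S, ∀ J ∈ S, ivSet I ⊆ ivSet J ∨ ivSet J ⊆ ivSet I ∨ ivSet I ∩ ivSet J = ∅) ∧
    ∀ R ∈ S, (∑' Q : ↥(maxIn S R), len (Q : ℝ × ℝ)) ≤ ε * len R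

/-- `Σ_{I ∈ F} ⟨u⟩_I^q · ⟨v⟩_I · |I|`. -/
def sumTest (q : ℝ) (u v : ℝ → ℝ) (F : Set (ℝ × ℝ)) : ℝ :=
  ∑' I : ↥F, avg u (I : ℝ × ℝ) ^ q * avg v (I : ℝ × ℝ) * len (I : ℝ × ℝ)


/-! ### auxiliary development -/

section Aux

variable (k : ℕ) (ch : ℝ × ℝ → Bool)

/-- `ρ = 3^{-k}`, the ratio of scales between consecutive generations. -/
def rho : ℝ := (3 : ℝ) ^ (-(k : ℤ))

/-- `c = 3^k/(3^{k-1}+1)`. -/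
def cst : ℝ := (3 : ℝ) ^ k / ((3 : ℝ) ^ (k - 1) + 1)

/-- The `j`-th child of `K`. -/
def chI (K : ℝ × ℝ) (j : ℕ) : ℝ × ℝ :=
  ((mid K).1 + (j : ℝ) * ((3 : ℝ) ^ (1 - (k : ℤ)) * len (mid K)),
   (mid K).1 + ((j : ℝ) + 1) * ((3 : ℝ) ^ (1 - (k : ℤ)) * len (mid K)))

variable {k ch}

lemma rho_pos : 0 < rho k := by rw [rho]; positivity

lemma pow3_pos : (0:ℝ) < (3:ℝ) ^ (k-1) := by positivity

lemma threek_rho (hk : 1 ≤ k) : (3:ℝ) ^ (k-1) * rho k = 1/3 := by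
  have : ((3:ℝ) ^ (k-1)) = (3:ℝ) ^ ((k:ℤ) - 1) := by
    rw [← zpow_natCast]
    congr 1
    omega
  rw [this, rho, ← zpow_add₀ (by norm_num : (3:ℝ) ≠ 0)]
  have h2 : (k:ℤ) - 1 + -(k:ℤ) = -1 := by ring
  rw [h2]
  norm_num

lemma r_eq_rho : (3:ℝ) ^ (1 - (k:ℤ)) = 3 * rho k := by
  rw [rho, show (1 - (k:ℤ)) = 1 + -(k:ℤ) by ring,
    zpow_add₀ (by norm_num : (3:ℝ) ≠ 0)]
  norm_num

lemma rho_le (hk : 3 ≤ k) : rho k ≤ 1/12 := by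
  have h1 : (27:ℝ) ≤ 3 ^ k := by
    calc (27:ℝ) = 3 ^ (3:ℕ) := by norm_num
    _ ≤ 3 ^ k := by
      apply pow_le_pow_right₀ (by norm_num) hk
  have h2 : rho k = ((3:ℝ) ^ k)⁻¹ := by
    rw [rho, zpow_neg, zpow_natCast]
  rw [h2]
  rw [inv_le_comm₀ (by positivity) (by norm_num)]
  linarith

lemma rho_lt_third (hk : 3 ≤ k) : rho k < 1/3 := lt_of_le_of_lt (rho_le hk) (by norm_num)

lemma cst_key (hk : 1 ≤ k) : cst k * ((3:ℝ) ^ (k-1) + 1) * rho k = 1 := by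
  have h3 : ((3:ℝ) ^ (k-1) + 1) ≠ 0 := by positivity
  have : cst k * ((3:ℝ) ^ (k-1) + 1) = (3:ℝ)^k := by
    rw [cst]; field_simp
  rw [this, rho, ← zpow_natCast (3:ℝ) k, ← zpow_add₀ (by norm_num : (3:ℝ) ≠ 0)]
  simp

lemma pow_split (hk : 1 ≤ k) : (3:ℝ) ^ k = 3 * (3:ℝ) ^ (k-1) := by
  rw [← pow_succ']
  congr 1
  omega

lemma one_lt_cst (hk : 1 ≤ k) : 1 < cst k := by
  rw [cst, lt_div_iff₀ (by positivity), pow_split hk]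
  have : (1:ℝ) ≤ (3:ℝ) ^ (k-1) := one_le_pow₀ (by norm_num)
  linarith

lemma cst_pos : 0 < cst k := by rw [cst]; positivity

lemma cst_lt_three (hk : 1 ≤ k) : cst k < 3 := by
  rw [cst, div_lt_iff₀ (by positivity), pow_split hk]
  have : (0:ℝ) < (3:ℝ) ^ (k-1) := by positivity
  linarith

lemma len_mid (K : ℝ × ℝ) : len (mid K) = len K / 3 := by
  simp only [len, mid]; ring

lemma mid_fst (K : ℝ × ℝ) : (mid K).1 = K.1 + len K / 3 := by
  simp only [mid, len]

lemma mid_snd (K : ℝ × ℝ) : (mid K).2 = K.2 - len K / 3 := by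
  simp only [mid, len]

lemma chI_fst (K : ℝ × ℝ) (j : ℕ) : (chI k K j).1 = (mid K).1 + j * (rho k * len K) := by
  show (mid K).1 + (j : ℝ) * ((3 : ℝ) ^ (1 - (k : ℤ)) * len (mid K)) = _
  rw [r_eq_rho, len_mid]; ring

lemma chI_snd (K : ℝ × ℝ) (j : ℕ) : (chI k K j).2 = (mid K).1 + (j+1) * (rho k * len K) := by
  show (mid K).1 + ((j : ℝ) + 1) * ((3 : ℝ) ^ (1 - (k : ℤ)) * len (mid K)) = _
  rw [r_eq_rho, len_mid]; ring

lemma len_chI (K : ℝ × ℝ) (j : ℕ) : len (chI k K j) = rho k * len K := by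
  show (chI k K j).2 - (chI k K j).1 = _
  rw [chI_fst, chI_snd]; ring

lemma Kfam_succ {i : ℕ} {K' : ℝ × ℝ} :
    K' ∈ Kfam k (i+1) ↔ ∃ K ∈ Kfam k i, ∃ j : ℕ, j < 3 ^ (k-1) ∧ K' = chI k K j := Iff.rfl

/-- basic structure of the members of `Kfam`. -/
lemma Kfam_struct (hk : 1 ≤ k) : ∀ i, ∀ K ∈ Kfam k i,
    0 ≤ K.1 ∧ K.2 ≤ 1 ∧ len K = rho k ^ i := by
  intro i
  induction i with
  | zero =>
    rintro K (rfl : K = _)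
    simp [len]
  | succ i ih =>
    rintro K' ⟨K, hK, j, hj, rfl⟩
    obtain ⟨h0, h1, hlen⟩ := ih K hK
    have hρ := rho_pos (k := k)
    have hlen0 : 0 ≤ len K := by rw [hlen]; positivity
    have hjle : (j:ℝ) + 1 ≤ (3:ℝ) ^ (k-1) := by
      have : (j:ℝ) + 1 ≤ ((3^(k-1) : ℕ) : ℝ) := by exact_mod_cast hj
      simpa using this
    have hj0 : (0:ℝ) ≤ (j:ℝ) := Nat.cast_nonneg j
    refine ⟨?_, ?_, ?_⟩
    · have : (0:ℝ) ≤ (j:ℝ) * ((3:ℝ) ^ (1 - (k:ℤ)) * len (mid K)) := by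
        apply mul_nonneg hj0
        apply mul_nonneg (by positivity)
        rw [len_mid]; linarith
      show 0 ≤ (mid K).1 + _
      rw [mid_fst]
      linarith
    · show (mid K).1 + ((j:ℝ)+1) * ((3:ℝ) ^ (1 - (k:ℤ)) * len (mid K)) ≤ 1
      have hr : (3:ℝ) ^ (1 - (k:ℤ)) * len (mid K) = rho k * len K := by
        rw [r_eq_rho, len_mid]; ring
      rw [mid_fst, hr]
      have : ((j:ℝ)+1) * (rho k * len K) ≤ (3:ℝ)^(k-1) * (rho k * len K) := by
        apply mul_le_mul_of_nonneg_right hjle (by positivity)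
      have h13 : (3:ℝ)^(k-1) * (rho k * len K) = len K / 3 := by
        rw [← mul_assoc, threek_rho hk]; ring
      have : K.1 + len K / 3 + ((j:ℝ)+1) * (rho k * len K) ≤ K.1 + len K / 3 + len K / 3 := by
        rw [← h13]; linarith
      have hK2 : K.1 + len K / 3 + len K / 3 ≤ K.2 := by simp only [len] at hlen0 ⊢; linarith
      linarith
    · show len (chI k K j) = _
      rw [len_chI, hlen, pow_succ]
      ring

lemma Kfam_len (hk : 1 ≤ k) {i : ℕ} {K : ℝ × ℝ} (hK : K ∈ Kfam k i) : len K = rho k ^ i :=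
  (Kfam_struct hk i K hK).2.2

lemma Kfam_len_pos (hk : 1 ≤ k) {i : ℕ} {K : ℝ × ℝ} (hK : K ∈ Kfam k i) : 0 < len K := by
  rw [Kfam_len hk hK]; exact pow_pos rho_pos i

lemma Kfam_fst_lt_snd (hk : 1 ≤ k) {i : ℕ} {K : ℝ × ℝ} (hK : K ∈ Kfam k i) : K.1 < K.2 := by
  have := Kfam_len_pos hk hK; simp only [len] at this; linarith

lemma ivSet_def (I : ℝ × ℝ) : ivSet I = Ico I.1 I.2 := rfl

lemma len_def (I : ℝ × ℝ) : len I = I.2 - I.1 := rfl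

lemma Ico_disj {a b c d : ℝ} (h : b ≤ c) : Ico a b ∩ Ico c d = ∅ := by
  ext x
  simp only [mem_inter_iff, mem_Ico, mem_empty_iff_false, iff_false, not_and]
  intro h1 h2 h3
  linarith

lemma Ico_disj' {a b c d : ℝ} (h : d ≤ a) : Ico a b ∩ Ico c d = ∅ := by
  rw [inter_comm]; exact Ico_disj h

lemma mid_subset {K : ℝ × ℝ} (h : 0 ≤ len K) : ivSet (mid K) ⊆ ivSet K := by
  rw [ivSet_def, ivSet_def, mid_fst, mid_snd]
  apply Ico_subset_Ico <;> linarith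

lemma chI_subset_mid (hk : 1 ≤ k) {i : ℕ} {K : ℝ × ℝ} (hK : K ∈ Kfam k i) {j : ℕ}
    (hj : j < 3 ^ (k-1)) : ivSet (chI k K j) ⊆ ivSet (mid K) := by
  have hρ := rho_pos (k := k)
  have hL := Kfam_len_pos hk hK
  have hjle : (j:ℝ) + 1 ≤ (3:ℝ) ^ (k-1) := by
    have : (j:ℝ) + 1 ≤ ((3 ^ (k-1) : ℕ) : ℝ) := by exact_mod_cast hj
    simpa using this
  have h1 : ((j:ℝ)+1) * (rho k * len K) ≤ (3:ℝ)^(k-1) * (rho k * len K) :=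
    mul_le_mul_of_nonneg_right hjle (by positivity)
  have h2 : (3:ℝ)^(k-1) * (rho k * len K) = len K / 3 := by
    rw [← mul_assoc, threek_rho hk]; ring
  have hj0 : (0:ℝ) ≤ (j:ℝ) := Nat.cast_nonneg j
  have hld : len K = K.2 - K.1 := rfl
  have hj0' : (0:ℝ) ≤ (j:ℝ) * (rho k * len K) :=
    mul_nonneg hj0 (by positivity)
  rw [ivSet_def, ivSet_def, chI_fst, chI_snd, mid_snd, mid_fst]
  apply Ico_subset_Ico
  · linarith
  · linarith

lemma chI_disj {K : ℝ × ℝ} (hLK : 0 ≤ len K) {j j' : ℕ} (hne : j ≠ j') :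
    ivSet (chI k K j) ∩ ivSet (chI k K j') = ∅ := by
  have hρ := rho_pos (k := k)
  have key : ∀ a b : ℕ, a < b → ivSet (chI k K a) ∩ ivSet (chI k K b) = ∅ := by
    intro a b hab
    rw [ivSet_def, ivSet_def, chI_fst, chI_snd, chI_fst, chI_snd]
    apply Ico_disj
    have hab' : (a:ℝ) + 1 ≤ (b:ℝ) := by exact_mod_cast hab
    have h0 : (0:ℝ) ≤ rho k * len K := mul_nonneg (le_of_lt hρ) hLK
    have := mul_le_mul_of_nonneg_right hab' h0
    linarith
  rcases Nat.lt_or_ge j j' with h | h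
  · exact key j j' h
  · rw [inter_comm]; exact key j' j (lt_of_le_of_ne h (Ne.symm hne))

lemma Ico_tile (a d : ℝ) (hd : 0 ≤ d) : ∀ n : ℕ,
    (⋃ j ∈ Finset.range n, Ico (a + (j:ℝ)*d) (a + ((j:ℝ)+1)*d)) = Ico a (a + (n:ℝ)*d) := by
  intro n
  induction n with
  | zero => simp
  | succ n ih =>
    have hnd : (0:ℝ) ≤ (n:ℝ) * d := mul_nonneg (Nat.cast_nonneg n) hd
    rw [Finset.range_add_one, Finset.set_biUnion_insert, ih, union_comm,
      Ico_union_Ico_eq_Ico (by linarith) (by linarith)]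
    push_cast; ring_nf

lemma mid_tile (hk : 1 ≤ k) {i : ℕ} {K : ℝ × ℝ} (hK : K ∈ Kfam k i) :
    (⋃ j ∈ Finset.range (3 ^ (k-1)), ivSet (chI k K j)) = ivSet (mid K) := by
  have hρ := rho_pos (k := k)
  have hL := Kfam_len_pos hk hK
  have h := Ico_tile (mid K).1 (rho k * len K) (by positivity) (3 ^ (k-1))
  have hN : ((3 ^ (k-1) : ℕ) : ℝ) * (rho k * len K) = len K / 3 := by
    push_cast
    rw [← mul_assoc, threek_rho hk]; ring
  have hend : (mid K).1 + ((3 ^ (k-1) : ℕ) : ℝ) * (rho k * len K) = (mid K).2 := by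
    rw [hN, mid_fst, mid_snd, len_def]; ring
  calc (⋃ j ∈ Finset.range (3 ^ (k-1)), ivSet (chI k K j))
      = ⋃ j ∈ Finset.range (3 ^ (k-1)),
          Ico ((mid K).1 + (j:ℝ)*(rho k * len K)) ((mid K).1 + ((j:ℝ)+1)*(rho k * len K)) := by
        apply Set.iUnion_congr; intro j
        apply Set.iUnion_congr; intro _
        rw [ivSet_def, chI_fst, chI_snd]
    _ = Ico (mid K).1 ((mid K).1 + ((3 ^ (k-1) : ℕ) : ℝ) * (rho k * len K)) := h
    _ = ivSet (mid K) := by rw [hend, ivSet_def]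

lemma pair_eq_of_ivSet_eq {A B : ℝ × ℝ} (h : ivSet A = ivSet B) (hA : A.1 < A.2) : A = B := by
  have h' : Ico A.1 A.2 = Ico B.1 B.2 := h
  rw [Set.Ico_eq_Ico_iff (Or.inl hA)] at h'
  exact Prod.ext_iff.mpr ⟨h'.1, h'.2⟩

lemma Kfam_eq_or_disj (hk : 1 ≤ k) : ∀ i, ∀ K ∈ Kfam k i, ∀ K' ∈ Kfam k i,
    K = K' ∨ ivSet K ∩ ivSet K' = ∅ := by
  intro i
  induction i with
  | zero =>
    rintro K (rfl : K = _) K' (rfl : K' = _)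
    left; rfl
  | succ i ih =>
    rintro K1 ⟨P, hP, j, hj, rfl⟩ K2 ⟨P', hP', j', hj', rfl⟩
    rcases ih P hP P' hP' with rfl | hdisj
    · rcases eq_or_ne j j' with rfl | hne
      · left; rfl
      · right; exact chI_disj (le_of_lt (Kfam_len_pos hk hP)) hne
    · right
      have s1 : ivSet (chI k P j) ⊆ ivSet P :=
        (chI_subset_mid hk hP hj).trans (mid_subset (le_of_lt (Kfam_len_pos hk hP)))
      have s2 : ivSet (chI k P' j') ⊆ ivSet P' :=
        (chI_subset_mid hk hP' hj').trans (mid_subset (le_of_lt (Kfam_len_pos hk hP')))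
      apply eq_empty_of_subset_empty
      rw [← hdisj]
      exact inter_subset_inter s1 s2

lemma Kfam_eq_of_meet (hk : 1 ≤ k) {i : ℕ} {K K' : ℝ × ℝ} (hK : K ∈ Kfam k i)
    (hK' : K' ∈ Kfam k i) {x : ℝ} (h1 : x ∈ ivSet K) (h2 : x ∈ ivSet K') : K = K' := by
  rcases Kfam_eq_or_disj hk i K hK K' hK' with rfl | hd
  · rfl
  · exfalso
    have : x ∈ ivSet K ∩ ivSet K' := ⟨h1, h2⟩
    rw [hd] at this
    exact this

lemma Kfam_nest (hk : 1 ≤ k) : ∀ m, ∀ K ∈ Kfam k m, ∀ i, i ≤ m →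
    ∃ A ∈ Kfam k i, ivSet K ⊆ ivSet A := by
  intro m
  induction m with
  | zero =>
    intro K hK i hi
    interval_cases i
    exact ⟨K, hK, subset_rfl⟩
  | succ m ih =>
    rintro K ⟨P, hP, j, hj, rfl⟩ i hi
    rcases Nat.eq_or_lt_of_le hi with rfl | hlt
    · exact ⟨_, ⟨P, hP, j, hj, rfl⟩, subset_rfl⟩
    · obtain ⟨A, hA, hsub⟩ := ih P hP i (Nat.lt_succ_iff.mp hlt)
      exact ⟨A, hA, ((chI_subset_mid hk hP hj).trans
        (mid_subset (le_of_lt (Kfam_len_pos hk hP)))).trans hsub⟩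

lemma Jfam_mem {ℓ : ℕ} {J : ℝ × ℝ} : J ∈ Jfam k (ℓ+1) ↔ ∃ P ∈ Kfam k ℓ, J = mid P := by
  simp [Jfam]

/-! ### geometry of the chosen adjacent intervals -/

lemma IJ_len (J : ℝ × ℝ) : len (IJ k ch J) = (3:ℝ) ^ (1-(k:ℤ)) * len J := by
  rw [IJ]
  split_ifs <;> simp [len] <;> ring

lemma IJ_mid_len {ℓ : ℕ} {P : ℝ × ℝ} (hP : P ∈ Kfam k ℓ) :
    len (IJ k ch (mid P)) = rho k * len P := by
  rw [IJ_len, r_eq_rho, len_mid]; ring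

lemma IJ_mid_subset (hk : 3 ≤ k) {ℓ : ℕ} {P : ℝ × ℝ} (hP : P ∈ Kfam k ℓ) :
    ivSet (IJ k ch (mid P)) ⊆ ivSet P := by
  have hρ := rho_pos (k := k)
  have hρ3 := rho_lt_third (k := k) hk
  have hL := Kfam_len_pos (le_trans (by norm_num) hk) hP
  have hr : (3:ℝ) ^ (1-(k:ℤ)) * len (mid P) = rho k * len P := by
    rw [r_eq_rho, len_mid]; ring
  rw [IJ]
  split_ifs
  · rw [ivSet_def, ivSet_def]
    simp only [hr, mid_snd]
    apply Ico_subset_Ico <;> [skip; skip] <;> nlinarith [len_def P]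
  · rw [ivSet_def, ivSet_def]
    simp only [hr, mid_fst]
    apply Ico_subset_Ico <;> nlinarith [len_def P]

lemma IJ_mid_disj {P : ℝ × ℝ} : ivSet (IJ k ch (mid P)) ∩ ivSet (mid P) = ∅ := by
  rw [IJ]
  split_ifs
  · exact Ico_disj' le_rfl
  · exact Ico_disj le_rfl

lemma IJ_mid_window (hk : 3 ≤ k) {ℓ : ℕ} {P : ℝ × ℝ} (hP : P ∈ Kfam k ℓ) :
    ivSet (IJ k ch (mid P)) ⊆
      Ico ((mid P).1 - rho k * len P) ((mid P).2 + rho k * len P) := by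
  have hρ := rho_pos (k := k)
  have hL := Kfam_len_pos (le_trans (by norm_num) hk) hP
  have hmid : (mid P).1 ≤ (mid P).2 := by
    rw [mid_fst, mid_snd]; have := len_def P; nlinarith
  have hr : (3:ℝ) ^ (1-(k:ℤ)) * len (mid P) = rho k * len P := by
    rw [r_eq_rho, len_mid]; ring
  rw [IJ]
  split_ifs
  · rw [ivSet_def]
    simp only [hr]
    apply Ico_subset_Ico <;> nlinarith
  · rw [ivSet_def]
    simp only [hr]
    apply Ico_subset_Ico <;> nlinarith

/-! ### disjointness of the supports -/

lemma IJ_disj_level (hk : 3 ≤ k) {ℓ : ℕ} {P : ℝ × ℝ} (hP : P ∈ Kfam k ℓ) {A : ℝ × ℝ}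
    (hA : A ∈ Kfam k (ℓ+1)) : ivSet (IJ k ch (mid P)) ∩ ivSet A = ∅ := by
  have hk1 : 1 ≤ k := by omega
  obtain ⟨P', hP', j, hj, rfl⟩ := hA
  rcases Kfam_eq_or_disj hk1 ℓ P hP P' hP' with rfl | hd
  · apply eq_empty_of_subset_empty
    rw [← IJ_mid_disj (P := P) (k := k) (ch := ch)]
    exact inter_subset_inter subset_rfl (chI_subset_mid hk1 hP hj)
  · apply eq_empty_of_subset_empty
    rw [← hd]
    exact inter_subset_inter (IJ_mid_subset hk hP)
      ((chI_subset_mid hk1 hP' hj).trans (mid_subset (le_of_lt (Kfam_len_pos hk1 hP'))))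

lemma IJ_disj_deep (hk : 3 ≤ k) {ℓ m : ℕ} (h : ℓ < m) {P M : ℝ × ℝ} (hP : P ∈ Kfam k ℓ)
    (hM : M ∈ Kfam k m) : ivSet (IJ k ch (mid P)) ∩ ivSet M = ∅ := by
  have hk1 : 1 ≤ k := by omega
  obtain ⟨A, hA, hsub⟩ := Kfam_nest hk1 m M hM (ℓ+1) h
  apply eq_empty_of_subset_empty
  rw [← IJ_disj_level hk hP hA]
  exact inter_subset_inter subset_rfl hsub

lemma active_unique (hk : 3 ≤ k) {ℓ ℓ' : ℕ} {P P' : ℝ × ℝ} (hP : P ∈ Kfam k ℓ)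
    (hP' : P' ∈ Kfam k ℓ') {x : ℝ} (h1 : x ∈ ivSet (IJ k ch (mid P)))
    (h2 : x ∈ ivSet (IJ k ch (mid P'))) : ℓ = ℓ' ∧ P = P' := by
  have hk1 : 1 ≤ k := by omega
  have key : ∀ {a b : ℕ} {Q R : ℝ × ℝ}, Q ∈ Kfam k a → R ∈ Kfam k b → a < b →
      x ∈ ivSet (IJ k ch (mid Q)) → x ∈ ivSet (IJ k ch (mid R)) → False := by
    intro a b Q R hQ hR hab hxQ hxR
    have hxR' : x ∈ ivSet R := IJ_mid_subset hk hR hxR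
    have hd := IJ_disj_deep (ch := ch) hk hab hQ hR
    have : x ∈ ivSet (IJ k ch (mid Q)) ∩ ivSet R := ⟨hxQ, hxR'⟩
    rw [hd] at this
    exact this
  rcases lt_trichotomy ℓ ℓ' with h | rfl | h
  · exact (key hP hP' h h1 h2).elim
  · exact ⟨rfl, Kfam_eq_of_meet hk1 hP hP' (IJ_mid_subset hk hP h1) (IJ_mid_subset hk hP' h2)⟩
  · exact (key hP' hP h h2 h1).elim

lemma active_in (hk : 3 ≤ k) {i ℓ : ℕ} {K P : ℝ × ℝ} (hK : K ∈ Kfam k i) (hP : P ∈ Kfam k ℓ)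
    {x : ℝ} (hxK : x ∈ ivSet K) (hx : x ∈ ivSet (IJ k ch (mid P))) :
    i ≤ ℓ ∧ ivSet P ⊆ ivSet K := by
  have hk1 : 1 ≤ k := by omega
  have hil : i ≤ ℓ := by
    by_contra hcon
    push_neg at hcon
    obtain ⟨A, hA, hsub⟩ := Kfam_nest hk1 i K hK (ℓ+1) hcon
    have hd := IJ_disj_level (ch := ch) hk hP hA
    have : x ∈ ivSet (IJ k ch (mid P)) ∩ ivSet A := ⟨hx, hsub hxK⟩
    rw [hd] at this
    exact this
  obtain ⟨B, hB, hPB⟩ := Kfam_nest hk1 ℓ P hP i hil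
  have hxP : x ∈ ivSet P := IJ_mid_subset hk hP hx
  have hBK : B = K := Kfam_eq_of_meet hk1 hB hK (hPB hxP) hxK
  exact ⟨hil, hBK ▸ hPB⟩

lemma active_outer (hk : 3 ≤ k) {i ℓ : ℕ} {K P : ℝ × ℝ} (hK : K ∈ Kfam k i)
    (hP : P ∈ Kfam k ℓ) {x : ℝ} (hxK : x ∈ ivSet K) (hxJ : x ∉ ivSet (mid K))
    (hx : x ∈ ivSet (IJ k ch (mid P))) : ℓ = i ∧ P = K := by
  have hk1 : 1 ≤ k := by omega
  obtain ⟨hle, hPK⟩ := active_in hk hK hP hxK hx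
  have hxP : x ∈ ivSet P := IJ_mid_subset hk hP hx
  rcases Nat.eq_or_lt_of_le hle with rfl | hlt
  · exact ⟨rfl, Kfam_eq_of_meet hk1 hP hK hxP hxK⟩
  · exfalso
    obtain ⟨M, hM, hPM⟩ := Kfam_nest hk1 ℓ P hP (i+1) hlt
    obtain ⟨Q, hQ, j, hj, rfl⟩ := hM
    have hxmid : x ∈ ivSet (mid Q) := chI_subset_mid hk1 hQ hj (hPM hxP)
    have hQK : Q = K := Kfam_eq_of_meet hk1 hQ hK
      (mid_subset (le_of_lt (Kfam_len_pos hk1 hQ)) hxmid) hxK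
    exact hxJ (hQK ▸ hxmid)

lemma active_margin (hk : 3 ≤ k) {n ℓ : ℕ} {A P : ℝ × ℝ} (hA : A ∈ Kfam k n)
    (hP : P ∈ Kfam k ℓ) {x : ℝ} (hxA : x ∈ ivSet A) (hx : x ∈ ivSet (IJ k ch (mid P))) :
    A.1 + len A / 4 ≤ x ∧ x ≤ A.2 - len A / 4 := by
  have hk1 : 1 ≤ k := by omega
  have hρ := rho_pos (k := k)
  have hρ12 := rho_le (k := k) hk
  have hL := Kfam_len_pos hk1 hA
  have hlenA : len A = A.2 - A.1 := rfl
  obtain ⟨hle, hPA⟩ := active_in hk hA hP hxA hx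
  have hxP : x ∈ ivSet P := IJ_mid_subset hk hP hx
  have hprod : rho k * len A ≤ len A / 12 := by nlinarith
  have key : (mid A).1 - rho k * len A ≤ x ∧ x < (mid A).2 + rho k * len A := by
    rcases Nat.eq_or_lt_of_le hle with rfl | hlt
    · have hPA' : P = A := Kfam_eq_of_meet hk1 hP hA hxP hxA
      subst hPA'
      exact mem_Ico.mp (IJ_mid_window hk hP hx)
    · obtain ⟨M, hM, hPM⟩ := Kfam_nest hk1 ℓ P hP (n+1) hlt
      obtain ⟨Q, hQ, j, hj, rfl⟩ := hM
      have hxmid : x ∈ ivSet (mid Q) := chI_subset_mid hk1 hQ hj (hPM hxP)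
      have hQA : Q = A := Kfam_eq_of_meet hk1 hQ hA
        (mid_subset (le_of_lt (Kfam_len_pos hk1 hQ)) hxmid) hxA
      subst hQA
      have h1 : (mid Q).1 ≤ x := hxmid.1
      have h2 : x < (mid Q).2 := hxmid.2
      constructor <;> nlinarith
  obtain ⟨h1, h2⟩ := key
  rw [mid_fst] at h1
  rw [mid_snd] at h2
  constructor <;> nlinarith

/-! ### pointwise evaluation of the weights -/

/-- `d = c^{1-p}`. -/
def dst (p : ℝ) (k : ℕ) : ℝ := cst k ^ (1 - p)

variable {p : ℝ}

lemma dst_pos : 0 < dst p k := Real.rpow_pos_of_pos cst_pos _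

lemma dst_le_one (hk : 1 ≤ k) (hp : 1 < p) : dst p k ≤ 1 :=
  Real.rpow_le_one_of_one_le_of_nonpos (le_of_lt (one_lt_cst hk)) (by linarith)

lemma wgt_eq_on (hk : 3 ≤ k) {ℓ : ℕ} {P : ℝ × ℝ} (hP : P ∈ Kfam k ℓ) {x : ℝ}
    (hx : x ∈ ivSet (IJ k ch (mid P))) : wgt k ch x = cst k ^ (ℓ+1) := by
  have hJm : mid P ∈ Jfam k (ℓ+1) := Jfam_mem.mpr ⟨P, hP, rfl⟩
  have inner_eq : ∀ i : ℕ, (∑' J : ↥(Jfam k (i+1)),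
      Set.indicator (ivSet (IJ k ch (J : ℝ × ℝ))) (fun _ => (cst k)^(i+1)) x)
      = if i = ℓ then cst k ^ (ℓ+1) else 0 := by
    intro i
    split_ifs with hi
    · subst hi
      rw [tsum_eq_single (⟨mid P, hJm⟩ : ↥(Jfam k (i+1)))]
      · exact Set.indicator_of_mem hx _
      · rintro ⟨J', hJ'⟩ hne
        obtain ⟨P', hP', rfl⟩ := Jfam_mem.mp hJ'
        apply Set.indicator_of_notMem
        intro hx'
        obtain ⟨-, hPP⟩ := active_unique hk hP' hP hx' hx
        exact hne (Subtype.ext (congrArg mid hPP))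
    · have hz : ∀ J' : ↥(Jfam k (i+1)),
          Set.indicator (ivSet (IJ k ch (J' : ℝ × ℝ))) (fun _ => (cst k)^(i+1)) x = 0 := by
        rintro ⟨J', hJ'⟩
        obtain ⟨P', hP', rfl⟩ := Jfam_mem.mp hJ'
        apply Set.indicator_of_notMem
        intro hx'
        exact hi (active_unique hk hP' hP hx' hx).1
      rw [tsum_congr hz, tsum_zero]
  show (∑' i : ℕ, ∑' J : ↥(Jfam k (i+1)),
      Set.indicator (ivSet (IJ k ch (J : ℝ × ℝ))) (fun _ => (cst k)^(i+1)) x) = cst k ^ (ℓ+1)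
  rw [tsum_congr inner_eq, tsum_ite_eq]

lemma wgt_eq_zero' (hk : 3 ≤ k) {x : ℝ}
    (hx : ∀ ℓ (P : ℝ × ℝ), P ∈ Kfam k ℓ → x ∉ ivSet (IJ k ch (mid P))) : wgt k ch x = 0 := by
  have inner_eq : ∀ i : ℕ, (∑' J : ↥(Jfam k (i+1)),
      Set.indicator (ivSet (IJ k ch (J : ℝ × ℝ))) (fun _ => (cst k)^(i+1)) x) = 0 := by
    intro i
    have hz : ∀ J' : ↥(Jfam k (i+1)),
        Set.indicator (ivSet (IJ k ch (J' : ℝ × ℝ))) (fun _ => (cst k)^(i+1)) x = 0 := by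
      rintro ⟨J', hJ'⟩
      obtain ⟨P', hP', rfl⟩ := Jfam_mem.mp hJ'
      exact Set.indicator_of_notMem (hx _ _ hP') _
    rw [tsum_congr hz, tsum_zero]
  show (∑' i : ℕ, ∑' J : ↥(Jfam k (i+1)),
      Set.indicator (ivSet (IJ k ch (J : ℝ × ℝ))) (fun _ => (cst k)^(i+1)) x) = 0
  rw [tsum_congr inner_eq, tsum_zero]

lemma wgt_cases (hk : 3 ≤ k) (x : ℝ) :
    (wgt k ch x = 0 ∧ ∀ ℓ (P : ℝ × ℝ), P ∈ Kfam k ℓ → x ∉ ivSet (IJ k ch (mid P))) ∨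
    ∃ ℓ P, P ∈ Kfam k ℓ ∧ x ∈ ivSet (IJ k ch (mid P)) ∧ wgt k ch x = cst k ^ (ℓ+1) := by
  by_cases h : ∃ ℓ : ℕ, ∃ P : ℝ × ℝ, P ∈ Kfam k ℓ ∧ x ∈ ivSet (IJ k ch (mid P))
  · obtain ⟨ℓ, P, hP, hx⟩ := h
    exact Or.inr ⟨ℓ, P, hP, hx, wgt_eq_on hk hP hx⟩
  · push_neg at h
    exact Or.inl ⟨wgt_eq_zero' hk h, h⟩

lemma wgt_nonneg (hk : 3 ≤ k) (x : ℝ) : 0 ≤ wgt k ch x := by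
  rcases wgt_cases (ch := ch) hk x with ⟨h, -⟩ | ⟨ℓ, P, -, -, h⟩
  · rw [h]
  · rw [h]
    exact pow_nonneg (le_of_lt cst_pos) _

lemma sgm_eq_zero_of_wgt {x : ℝ} (h : wgt k ch x = 0) : sgm p k ch x = 0 := by
  rw [sgm, if_neg]
  rw [h]
  exact lt_irrefl 0

lemma sgm_eq_on (hk : 3 ≤ k) {ℓ : ℕ} {P : ℝ × ℝ} (hP : P ∈ Kfam k ℓ) {x : ℝ}
    (hx : x ∈ ivSet (IJ k ch (mid P))) : sgm p k ch x = dst p k ^ (ℓ+1) := by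
  have hw := wgt_eq_on (ch := ch) hk hP hx
  have hc := cst_pos (k := k)
  rw [sgm, if_pos (by rw [hw]; positivity), hw, dst]
  rw [← Real.rpow_natCast (cst k) (ℓ+1), ← Real.rpow_mul (le_of_lt hc), mul_comm,
    Real.rpow_mul (le_of_lt hc), Real.rpow_natCast]

lemma sgm_nonneg (x : ℝ) : 0 ≤ sgm p k ch x := by
  rw [sgm]
  split_ifs with h
  · exact le_of_lt (Real.rpow_pos_of_pos h _)
  · exact le_rfl

lemma sgm_le_on (hk : 3 ≤ k) (hp : 1 < p) {i : ℕ} {K : ℝ × ℝ} (hK : K ∈ Kfam k i) {x : ℝ}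
    (hxK : x ∈ ivSet K) : sgm p k ch x ≤ dst p k ^ (i+1) := by
  have hk1 : 1 ≤ k := by omega
  rcases wgt_cases (ch := ch) hk x with ⟨h, -⟩ | ⟨ℓ, P, hP, hx, -⟩
  · rw [sgm_eq_zero_of_wgt h]
    exact pow_nonneg (le_of_lt dst_pos) _
  · rw [sgm_eq_on hk hP hx]
    exact pow_le_pow_of_le_one (le_of_lt dst_pos) (dst_le_one hk1 hp)
      (by have := (active_in hk hK hP hxK hx).1; omega)

lemma wgt_outer (hk : 3 ≤ k) {i : ℕ} {K : ℝ × ℝ} (hK : K ∈ Kfam k i) {x : ℝ}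
    (hxK : x ∈ ivSet K) (hxJ : x ∉ ivSet (mid K)) :
    wgt k ch x = Set.indicator (ivSet (IJ k ch (mid K))) (fun _ => cst k ^ (i+1)) x := by
  by_cases hx : x ∈ ivSet (IJ k ch (mid K))
  · rw [Set.indicator_of_mem hx, wgt_eq_on hk hK hx]
  · rw [Set.indicator_of_notMem hx]
    rcases wgt_cases (ch := ch) hk x with ⟨h, -⟩ | ⟨ℓ, P, hP, hxP, hval⟩
    · exact h
    · exfalso
      obtain ⟨-, rfl⟩ := active_outer hk hK hP hxK hxJ hxP
      exact hx hxP

lemma sgm_outer (hk : 3 ≤ k) {i : ℕ} {K : ℝ × ℝ} (hK : K ∈ Kfam k i) {x : ℝ}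
    (hxK : x ∈ ivSet K) (hxJ : x ∉ ivSet (mid K)) :
    sgm p k ch x = Set.indicator (ivSet (IJ k ch (mid K))) (fun _ => dst p k ^ (i+1)) x := by
  by_cases hx : x ∈ ivSet (IJ k ch (mid K))
  · rw [Set.indicator_of_mem hx, sgm_eq_on hk hK hx]
  · rw [Set.indicator_of_notMem hx]
    rcases wgt_cases (ch := ch) hk x with ⟨h, -⟩ | ⟨ℓ, P, hP, hxP, hval⟩
    · exact sgm_eq_zero_of_wgt h
    · exfalso
      obtain ⟨-, rfl⟩ := active_outer hk hK hP hxK hxJ hxP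
      exact hx hxP

/-! ### measurability -/

lemma inner_zero (i : ℕ) {x : ℝ}
    (h : ∀ P ∈ Kfam k i, x ∉ ivSet (IJ k ch (mid P))) :
    (∑' J : ↥(Jfam k (i+1)),
      Set.indicator (ivSet (IJ k ch (J : ℝ × ℝ))) (fun _ => (cst k)^(i+1)) x) = 0 := by
  have hz : ∀ J' : ↥(Jfam k (i+1)),
      Set.indicator (ivSet (IJ k ch (J' : ℝ × ℝ))) (fun _ => (cst k)^(i+1)) x = 0 := by
    rintro ⟨J', hJ'⟩
    obtain ⟨P', hP', rfl⟩ := Jfam_mem.mp hJ'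
    exact Set.indicator_of_notMem (h _ hP') _
  rw [tsum_congr hz, tsum_zero]

lemma Kfam_finite : ∀ i, (Kfam k i).Finite := by
  intro i
  induction i with
  | zero => exact Set.finite_singleton _
  | succ i ih =>
    apply Set.Finite.subset
      (Set.Finite.biUnion ih (fun K _ => Set.Finite.image (chI k K) (Set.finite_Iio (3^(k-1)))))
    rintro K' ⟨P, hP, j, hj, rfl⟩
    exact Set.mem_biUnion hP ⟨j, hj, rfl⟩

lemma Jfam_finite (i : ℕ) : (Jfam k (i+1)).Finite := by
  apply Set.Finite.subset ((Kfam_finite (k := k) i).image mid)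
  intro J hJ
  obtain ⟨P, hP, rfl⟩ := Jfam_mem.mp hJ
  exact ⟨P, hP, rfl⟩

lemma measurable_inner (i : ℕ) : Measurable (fun x : ℝ => ∑' J : ↥(Jfam k (i+1)),
    Set.indicator (ivSet (IJ k ch (J : ℝ × ℝ))) (fun _ => (cst k)^(i+1)) x) := by
  letI : Fintype ↥(Jfam k (i+1)) := (Jfam_finite (k := k) i).fintype
  have heq : (fun x : ℝ => ∑' J : ↥(Jfam k (i+1)),
      Set.indicator (ivSet (IJ k ch (J : ℝ × ℝ))) (fun _ => (cst k)^(i+1)) x)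
      = fun x : ℝ => ∑ J : ↥(Jfam k (i+1)),
      Set.indicator (ivSet (IJ k ch (J : ℝ × ℝ))) (fun _ => (cst k)^(i+1)) x := by
    funext x
    exact tsum_fintype _
  rw [heq]
  exact Finset.measurable_sum _
    (fun J _ => measurable_const.indicator (by exact measurableSet_Ico))

lemma measurable_wgt (hk : 3 ≤ k) : Measurable (wgt k ch) := by
  apply measurable_of_tendsto_metrizable
    (f := fun n x => ∑ i ∈ Finset.range n, (∑' J : ↥(Jfam k (i+1)),
      Set.indicator (ivSet (IJ k ch (J : ℝ × ℝ))) (fun _ => (cst k)^(i+1)) x))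
  · intro n
    exact Finset.measurable_sum _ (fun i _ => measurable_inner i)
  · rw [tendsto_pi_nhds]
    intro x
    have hsum : Summable (fun i : ℕ => ∑' J : ↥(Jfam k (i+1)),
        Set.indicator (ivSet (IJ k ch (J : ℝ × ℝ))) (fun _ => (cst k)^(i+1)) x) := by
      rcases wgt_cases (ch := ch) hk x with ⟨-, h⟩ | ⟨ℓ, P, hP, hx, -⟩
      · apply summable_of_ne_finset_zero (s := ∅)
        intro i _
        exact inner_zero i (fun P hP => h i P hP)
      · apply summable_of_ne_finset_zero (s := {ℓ})
        intro i hi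
        apply inner_zero i
        intro P' hP' hx'
        exact hi (by simp [(active_unique hk hP' hP hx' hx).1])
    exact hsum.hasSum.tendsto_sum_nat

lemma measurable_sgm (hk : 3 ≤ k) : Measurable (sgm p k ch) := by
  have hw := measurable_wgt (ch := ch) hk
  have h1 : MeasurableSet {x : ℝ | 0 < wgt k ch x} := measurableSet_lt measurable_const hw
  have heq : sgm p k ch =
      fun x => if 0 < wgt k ch x then Real.exp (Real.log (wgt k ch x) * (1-p)) else 0 := by
    funext x
    rw [sgm]
    split_ifs with h
    · exact Real.rpow_def_of_pos h _
    · rfl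
  rw [heq]
  exact Measurable.ite h1
    (Real.measurable_exp.comp ((Real.measurable_log.comp hw).mul_const (1-p)))
    measurable_const

/-! ### the `ℝ≥0∞`-valued weights -/

def EW (k : ℕ) (ch : ℝ × ℝ → Bool) : ℝ → ℝ≥0∞ := fun x => ENNReal.ofReal (wgt k ch x)

def ES (p : ℝ) (k : ℕ) (ch : ℝ × ℝ → Bool) : ℝ → ℝ≥0∞ :=
  fun x => ENNReal.ofReal (sgm p k ch x)

lemma measurable_EW (hk : 3 ≤ k) : Measurable (EW k ch) :=
  (measurable_wgt hk).ennreal_ofReal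

lemma measurable_ES (hk : 3 ≤ k) : Measurable (ES p k ch) :=
  (measurable_sgm hk).ennreal_ofReal

lemma mass_wgt_eq (hk : 3 ≤ k) (I : ℝ × ℝ) :
    mass (wgt k ch) I = (∫⁻ x in ivSet I, EW k ch x).toReal := by
  rw [mass, integral_eq_lintegral_of_nonneg_ae (ae_of_all _ (wgt_nonneg hk))
    (measurable_wgt hk).aestronglyMeasurable]
  rfl

lemma mass_sgm_eq (hk : 3 ≤ k) (I : ℝ × ℝ) :
    mass (sgm p k ch) I = (∫⁻ x in ivSet I, ES p k ch x).toReal := by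
  rw [mass, integral_eq_lintegral_of_nonneg_ae (ae_of_all _ (sgm_nonneg (p := p)))
    (measurable_sgm hk).aestronglyMeasurable]
  rfl

/-! ### integral identities -/

lemma EW_apply (x : ℝ) : EW k ch x = ENNReal.ofReal (wgt k ch x) := rfl

lemma ES_apply (x : ℝ) : ES p k ch x = ENNReal.ofReal (sgm p k ch x) := rfl

lemma vol_ivSet (I : ℝ × ℝ) : volume (ivSet I) = ENNReal.ofReal (len I) := by
  rw [ivSet_def, Real.volume_Ico]; rfl

lemma ivSet_measurable (I : ℝ × ℝ) : MeasurableSet (ivSet I) := by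
  rw [ivSet_def]; exact measurableSet_Ico

/-- key scalar identities -/
lemma scalar_one (hk : 1 ≤ k) : cst k * rho k = 1 - cst k / 3 := by
  have h3 := cst_key (k := k) hk
  have h1 := threek_rho (k := k) hk
  linear_combination h3 - cst k * h1

lemma lint_EW_IJ (hk : 3 ≤ k) {ℓ : ℕ} {P : ℝ × ℝ} (hP : P ∈ Kfam k ℓ) {S : Set ℝ}
    (hS : S ⊆ ivSet (IJ k ch (mid P))) (hSm : MeasurableSet S) :
    ∫⁻ x in S, EW k ch x = ENNReal.ofReal (cst k ^ (ℓ+1)) * volume S := by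
  rw [setLIntegral_congr_fun hSm (
    (fun x hx => by rw [EW_apply, wgt_eq_on hk hP (hS hx)] :
      ∀ x ∈ S, EW k ch x = ENNReal.ofReal (cst k ^ (ℓ+1))))]
  exact setLIntegral_const _ _

lemma lint_ES_IJ (hk : 3 ≤ k) {ℓ : ℕ} {P : ℝ × ℝ} (hP : P ∈ Kfam k ℓ) {S : Set ℝ}
    (hS : S ⊆ ivSet (IJ k ch (mid P))) (hSm : MeasurableSet S) :
    ∫⁻ x in S, ES p k ch x = ENNReal.ofReal (dst p k ^ (ℓ+1)) * volume S := by
  rw [setLIntegral_congr_fun hSm (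
    (fun x hx => by rw [ES_apply, sgm_eq_on hk hP (hS hx)] :
      ∀ x ∈ S, ES p k ch x = ENNReal.ofReal (dst p k ^ (ℓ+1))))]
  exact setLIntegral_const _ _

/-- decomposition of the integral over `K` into outer part and children. -/
lemma lint_split (hk : 1 ≤ k) {i : ℕ} {K : ℝ × ℝ} (hK : K ∈ Kfam k i) (f : ℝ → ℝ≥0∞) :
    ∫⁻ x in ivSet K, f x
      = (∫⁻ x in ivSet K \ ivSet (mid K), f x)
        + ∑ j ∈ Finset.range (3^(k-1)), ∫⁻ x in ivSet (chI k K j), f x := by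
  have hmid_sub := mid_subset (le_of_lt (Kfam_len_pos hk hK))
  have hsplit : ivSet K = (ivSet K \ ivSet (mid K)) ∪ ivSet (mid K) :=
    (diff_union_of_subset hmid_sub).symm
  have hch : ∫⁻ x in ivSet (mid K), f x
      = ∑ j ∈ Finset.range (3^(k-1)), ∫⁻ x in ivSet (chI k K j), f x := by
    rw [← mid_tile hk hK]
    exact lintegral_biUnion_finset
      (fun a _ b _ hab => Set.disjoint_iff_inter_eq_empty.mpr
        (chI_disj (le_of_lt (Kfam_len_pos hk hK)) hab))
      (fun j _ => ivSet_measurable _) f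
  conv_lhs => rw [hsplit]
  rw [lintegral_union (ivSet_measurable _) disjoint_sdiff_left, hch]

/-- the outer integral: on `K ∖ J` the weight is the single indicator. -/
lemma lint_EW_outer (hk : 3 ≤ k) {i : ℕ} {K : ℝ × ℝ} (hK : K ∈ Kfam k i) :
    ∫⁻ x in ivSet K \ ivSet (mid K), EW k ch x
      = ENNReal.ofReal (cst k ^ (i+1)) * volume (ivSet (IJ k ch (mid K))) := by
  have hIJK : ivSet (IJ k ch (mid K)) ⊆ ivSet K \ ivSet (mid K) := by
    intro x hx
    refine ⟨IJ_mid_subset hk hK hx, fun hmem => ?_⟩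
    have : x ∈ ivSet (IJ k ch (mid K)) ∩ ivSet (mid K) := ⟨hx, hmem⟩
    rw [IJ_mid_disj] at this
    exact this
  have hcong : ∀ x ∈ ivSet K \ ivSet (mid K), EW k ch x
      = Set.indicator (ivSet (IJ k ch (mid K)))
          (fun _ => ENNReal.ofReal (cst k ^ (i+1))) x := by
    intro x hx
    rw [EW_apply, wgt_outer hk hK hx.1 hx.2]
    by_cases hmem : x ∈ ivSet (IJ k ch (mid K))
    · rw [Set.indicator_of_mem hmem, Set.indicator_of_mem hmem]
    · rw [Set.indicator_of_notMem hmem, Set.indicator_of_notMem hmem, ENNReal.ofReal_zero]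
  rw [setLIntegral_congr_fun (MeasurableSet.diff (ivSet_measurable _) (ivSet_measurable _))
    hcong, lintegral_indicator (ivSet_measurable _),
    setLIntegral_const, Measure.restrict_apply (ivSet_measurable _)]
  congr 1
  rw [Set.inter_eq_left.mpr hIJK]

lemma lint_ES_outer (hk : 3 ≤ k) {i : ℕ} {K : ℝ × ℝ} (hK : K ∈ Kfam k i) :
    ∫⁻ x in ivSet K \ ivSet (mid K), ES p k ch x
      = ENNReal.ofReal (dst p k ^ (i+1)) * volume (ivSet (IJ k ch (mid K))) := by
  have hIJK : ivSet (IJ k ch (mid K)) ⊆ ivSet K \ ivSet (mid K) := by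
    intro x hx
    refine ⟨IJ_mid_subset hk hK hx, fun hmem => ?_⟩
    have : x ∈ ivSet (IJ k ch (mid K)) ∩ ivSet (mid K) := ⟨hx, hmem⟩
    rw [IJ_mid_disj] at this
    exact this
  have hcong : ∀ x ∈ ivSet K \ ivSet (mid K), ES p k ch x
      = Set.indicator (ivSet (IJ k ch (mid K)))
          (fun _ => ENNReal.ofReal (dst p k ^ (i+1))) x := by
    intro x hx
    rw [ES_apply, sgm_outer hk hK hx.1 hx.2]
    by_cases hmem : x ∈ ivSet (IJ k ch (mid K))
    · rw [Set.indicator_of_mem hmem, Set.indicator_of_mem hmem]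
    · rw [Set.indicator_of_notMem hmem, Set.indicator_of_notMem hmem, ENNReal.ofReal_zero]
  rw [setLIntegral_congr_fun (MeasurableSet.diff (ivSet_measurable _) (ivSet_measurable _))
    hcong, lintegral_indicator (ivSet_measurable _),
    setLIntegral_const, Measure.restrict_apply (ivSet_measurable _)]
  congr 1
  rw [Set.inter_eq_left.mpr hIJK]

lemma chI_mem (hk : 1 ≤ k) {i : ℕ} {K : ℝ × ℝ} (hK : K ∈ Kfam k i) {j : ℕ}
    (hj : j < 3^(k-1)) : chI k K j ∈ Kfam k (i+1) := ⟨K, hK, j, hj, rfl⟩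

lemma lint_EW_upper (hk : 3 ≤ k) : ∀ (m i : ℕ), ∀ K ∈ Kfam k i,
    ∫⁻ x in ivSet K, min (EW k ch x) (ENNReal.ofReal (cst k ^ (i+m)))
      ≤ ENNReal.ofReal (cst k ^ i * len K) := by
  have hk1 : 1 ≤ k := by omega
  have hρ := rho_pos (k := k)
  have hc := cst_pos (k := k)
  have hc1 := one_lt_cst (k := k) hk1
  intro m
  induction m with
  | zero =>
    intro i K hK
    have hL := le_of_lt (Kfam_len_pos hk1 hK)
    calc ∫⁻ x in ivSet K, min (EW k ch x) (ENNReal.ofReal (cst k ^ (i+0)))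
        ≤ ∫⁻ _ in ivSet K, ENNReal.ofReal (cst k ^ (i+0)) :=
          lintegral_mono (fun x => min_le_right _ _)
      _ = ENNReal.ofReal (cst k ^ i) * volume (ivSet K) := setLIntegral_const _ _
      _ = ENNReal.ofReal (cst k ^ i * len K) := by
          rw [vol_ivSet, ← ENNReal.ofReal_mul (by positivity)]
  | succ m ih =>
    intro i K hK
    have hL := Kfam_len_pos hk1 hK
    have hN : ((3^(k-1) : ℕ) : ℝ) = (3:ℝ)^(k-1) := by push_cast; ring
    rw [lint_split hk1 hK _]
    have houter : ∫⁻ x in ivSet K \ ivSet (mid K),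
        min (EW k ch x) (ENNReal.ofReal (cst k ^ (i+(m+1))))
        ≤ ENNReal.ofReal (cst k ^ (i+1) * (rho k * len K)) := by
      calc ∫⁻ x in ivSet K \ ivSet (mid K),
            min (EW k ch x) (ENNReal.ofReal (cst k ^ (i+(m+1))))
          ≤ ∫⁻ x in ivSet K \ ivSet (mid K), EW k ch x :=
            lintegral_mono (fun x => min_le_left _ _)
        _ = ENNReal.ofReal (cst k ^ (i+1)) * volume (ivSet (IJ k ch (mid K))) :=
            lint_EW_outer hk hK
        _ = ENNReal.ofReal (cst k ^ (i+1) * (rho k * len K)) := by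
            rw [vol_ivSet, IJ_mid_len hK, ← ENNReal.ofReal_mul (by positivity)]
    have hchild : ∀ j ∈ Finset.range (3^(k-1)),
        ∫⁻ x in ivSet (chI k K j), min (EW k ch x) (ENNReal.ofReal (cst k ^ (i+(m+1))))
          ≤ ENNReal.ofReal (cst k ^ (i+1) * (rho k * len K)) := by
      intro j hj
      have hmem := chI_mem hk1 hK (Finset.mem_range.mp hj)
      have := ih (i+1) _ hmem
      rw [len_chI] at this
      have hexp : i + (m+1) = (i+1) + m := by omega
      rw [hexp]
      exact this
    calc (∫⁻ x in ivSet K \ ivSet (mid K),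
          min (EW k ch x) (ENNReal.ofReal (cst k ^ (i+(m+1)))))
        + ∑ j ∈ Finset.range (3^(k-1)), ∫⁻ x in ivSet (chI k K j),
            min (EW k ch x) (ENNReal.ofReal (cst k ^ (i+(m+1))))
        ≤ ENNReal.ofReal (cst k ^ (i+1) * (rho k * len K))
          + ∑ j ∈ Finset.range (3^(k-1)), ENNReal.ofReal (cst k ^ (i+1) * (rho k * len K)) :=
          add_le_add houter (Finset.sum_le_sum hchild)
      _ = ENNReal.ofReal (cst k ^ (i+1) * (rho k * len K))
          + (3^(k-1) : ℕ) * ENNReal.ofReal (cst k ^ (i+1) * (rho k * len K)) := by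
          rw [Finset.sum_const, Finset.card_range, nsmul_eq_mul]
      _ = ENNReal.ofReal (cst k ^ (i+1) * (rho k * len K) * (1 + (3:ℝ)^(k-1))) := by
          rw [← ENNReal.ofReal_natCast (3^(k-1)), ← ENNReal.ofReal_mul (by positivity),
            ← ENNReal.ofReal_add (by positivity) (by positivity), hN]
          congr 1
          ring
      _ = ENNReal.ofReal (cst k ^ i * len K) := by
          congr 1
          have h3 := cst_key (k := k) hk1
          have hpow : cst k ^ (i+1) = cst k ^ i * cst k := pow_succ _ _
          rw [hpow]
          linear_combination (cst k ^ i * len K) * h3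

lemma lint_EW_le (hk : 3 ≤ k) {i : ℕ} {K : ℝ × ℝ} (hK : K ∈ Kfam k i) :
    ∫⁻ x in ivSet K, EW k ch x ≤ ENNReal.ofReal (cst k ^ i * len K) := by
  have hk1 : 1 ≤ k := by omega
  have hc1 := one_lt_cst (k := k) hk1
  have hmeas : ∀ m : ℕ, Measurable (fun x => min (EW k ch x) (ENNReal.ofReal (cst k ^ (i+m)))) :=
    fun m => (measurable_EW hk).min measurable_const
  have hmono : Monotone (fun m : ℕ => fun x =>
      min (EW k ch x) (ENNReal.ofReal (cst k ^ (i+m)))) := by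
    intro m m' hmm x
    exact min_le_min le_rfl (ENNReal.ofReal_le_ofReal
      (pow_le_pow_right₀ (le_of_lt hc1) (by omega)))
  have hsup : ∀ x, (⨆ m : ℕ, min (EW k ch x) (ENNReal.ofReal (cst k ^ (i+m)))) = EW k ch x := by
    intro x
    apply le_antisymm (iSup_le fun m => min_le_left _ _)
    obtain ⟨m, hm⟩ : ∃ m : ℕ, wgt k ch x ≤ cst k ^ (i+m) := by
      obtain ⟨m, hm⟩ := pow_unbounded_of_one_lt (wgt k ch x) hc1
      exact ⟨m, le_of_lt (lt_of_lt_of_le hm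
        (pow_le_pow_right₀ (le_of_lt hc1) (by omega)))⟩
    calc EW k ch x = min (EW k ch x) (ENNReal.ofReal (cst k ^ (i+m))) :=
          (min_eq_left (by rw [EW_apply]; exact ENNReal.ofReal_le_ofReal hm)).symm
      _ ≤ _ := le_iSup (fun m : ℕ => min (EW k ch x) (ENNReal.ofReal (cst k ^ (i+m)))) m
  calc ∫⁻ x in ivSet K, EW k ch x
      = ∫⁻ x in ivSet K, ⨆ m : ℕ, min (EW k ch x) (ENNReal.ofReal (cst k ^ (i+m))) := by
        apply lintegral_congr
        intro x
        rw [hsup x]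
    _ = ⨆ m : ℕ, ∫⁻ x in ivSet K, min (EW k ch x) (ENNReal.ofReal (cst k ^ (i+m))) :=
        lintegral_iSup hmeas hmono
    _ ≤ ENNReal.ofReal (cst k ^ i * len K) := iSup_le (fun m => lint_EW_upper hk m i K hK)

lemma lint_EW_lower (hk : 3 ≤ k) : ∀ (m i : ℕ), ∀ K ∈ Kfam k i,
    ENNReal.ofReal (cst k ^ i * (1 - (cst k / 3)^m) * len K) ≤ ∫⁻ x in ivSet K, EW k ch x := by
  have hk1 : 1 ≤ k := by omega
  have hρ := rho_pos (k := k)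
  have hc := cst_pos (k := k)
  intro m
  induction m with
  | zero =>
    intro i K hK
    simp
  | succ m ih =>
    intro i K hK
    have hL := Kfam_len_pos hk1 hK
    have hN : ((3^(k-1) : ℕ) : ℝ) = (3:ℝ)^(k-1) := by push_cast; ring
    rw [lint_split hk1 hK _]
    have houter : ENNReal.ofReal (cst k ^ (i+1) * (rho k * len K))
        ≤ ∫⁻ x in ivSet K \ ivSet (mid K), EW k ch x := by
      rw [lint_EW_outer hk hK, vol_ivSet, IJ_mid_len hK,
        ← ENNReal.ofReal_mul (by positivity)]
    have hchild : ∀ j ∈ Finset.range (3^(k-1)),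
        ENNReal.ofReal (cst k ^ (i+1) * (1 - (cst k / 3)^m) * (rho k * len K))
          ≤ ∫⁻ x in ivSet (chI k K j), EW k ch x := by
      intro j hj
      have hmem := chI_mem hk1 hK (Finset.mem_range.mp hj)
      have := ih (i+1) _ hmem
      rw [len_chI] at this
      exact this
    calc ENNReal.ofReal (cst k ^ i * (1 - (cst k / 3)^(m+1)) * len K)
        = ENNReal.ofReal (cst k ^ (i+1) * (rho k * len K))
          + ∑ j ∈ Finset.range (3^(k-1)),
            ENNReal.ofReal (cst k ^ (i+1) * (1 - (cst k / 3)^m) * (rho k * len K)) := by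
          rw [Finset.sum_const, Finset.card_range, nsmul_eq_mul,
            ← ENNReal.ofReal_natCast (3^(k-1)), hN]
          have h1 := threek_rho (k := k) hk1
          have h2 := scalar_one (k := k) hk1
          have hle1 : (cst k / 3)^m ≤ 1 := by
            apply pow_le_one₀ (by positivity)
            have := cst_lt_three (k := k) hk1
            linarith
          have ht : (0:ℝ) ≤ 1 - (cst k / 3)^m := by linarith
          have hρL : (0:ℝ) ≤ rho k * len K := mul_nonneg (le_of_lt hρ) (le_of_lt hL)
          have hA : (0:ℝ) ≤ cst k ^ (i+1) * (rho k * len K) :=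
            mul_nonneg (by positivity) hρL
          have hB : (0:ℝ) ≤ cst k ^ (i+1) * (1 - (cst k / 3)^m) * (rho k * len K) :=
            mul_nonneg (mul_nonneg (by positivity) ht) hρL
          rw [← ENNReal.ofReal_mul (by positivity : (0:ℝ) ≤ (3:ℝ)^(k-1)),
            ← ENNReal.ofReal_add hA (mul_nonneg (by positivity) hB)]
          congr 1
          have hco : cst k * rho k + (3:ℝ)^(k-1) * (cst k * (1 - (cst k / 3)^m) * rho k)
              = 1 - (cst k / 3) * (cst k / 3)^m := by
            linear_combination (cst k * (1 - (cst k / 3)^m)) * h1 + h2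
          have hpow : cst k ^ (i+1) = cst k ^ i * cst k := pow_succ _ _
          calc cst k ^ i * (1 - (cst k / 3)^(m+1)) * len K
              = cst k ^ i * len K * (1 - (cst k / 3) * (cst k / 3)^m) := by rw [pow_succ']; ring
            _ = cst k ^ i * len K * (cst k * rho k
                + (3:ℝ)^(k-1) * (cst k * (1 - (cst k / 3)^m) * rho k)) := by rw [hco]
            _ = cst k ^ (i+1) * (rho k * len K)
                + (3:ℝ)^(k-1) * (cst k ^ (i+1) * (1 - (cst k / 3)^m) * (rho k * len K)) := by
                rw [hpow]; ring
      _ ≤ _ := add_le_add houter (Finset.sum_le_sum hchild)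

lemma lint_EW_eq (hk : 3 ≤ k) {i : ℕ} {K : ℝ × ℝ} (hK : K ∈ Kfam k i) :
    ∫⁻ x in ivSet K, EW k ch x = ENNReal.ofReal (cst k ^ i * len K) := by
  have hk1 : 1 ≤ k := by omega
  refine le_antisymm (lint_EW_le hk hK) ?_
  have h0 : (0:ℝ) ≤ cst k / 3 := by have := cst_pos (k := k); positivity
  have h1 : cst k / 3 < 1 := by have := cst_lt_three (k := k) hk1; linarith
  have hpow := tendsto_pow_atTop_nhds_zero_of_lt_one h0 h1
  have hlim : Tendsto (fun m : ℕ => ENNReal.ofReal (cst k ^ i * (1 - (cst k / 3)^m) * len K))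
      atTop (𝓝 (ENNReal.ofReal (cst k ^ i * len K))) := by
    apply ENNReal.tendsto_ofReal
    have hre : Tendsto (fun m : ℕ => cst k ^ i * (1 - (cst k / 3)^m) * len K) atTop
        (𝓝 (cst k ^ i * (1 - 0) * len K)) :=
      ((tendsto_const_nhds.sub hpow).const_mul (cst k ^ i)).mul_const (len K)
    simpa using hre
  exact le_of_tendsto' hlim (fun m => lint_EW_lower hk m i K hK)

lemma lint_ES_upper (hk : 3 ≤ k) (hp : 1 < p) : ∀ (m i : ℕ), ∀ K ∈ Kfam k i,
    ∫⁻ x in ivSet K, ES p k ch x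
      ≤ ENNReal.ofReal (dst p k ^ (i+1) * (2 * rho k + (1/3:ℝ)^m) * len K) := by
  have hk1 : 1 ≤ k := by omega
  have hρ := rho_pos (k := k)
  have hd := dst_pos (p := p) (k := k)
  have hd1 := dst_le_one (p := p) (k := k) hk1 hp
  intro m
  induction m with
  | zero =>
    intro i K hK
    have hL := Kfam_len_pos hk1 hK
    have hdp : (0:ℝ) < dst p k ^ (i+1) := pow_pos hd _
    calc ∫⁻ x in ivSet K, ES p k ch x
        ≤ ∫⁻ _ in ivSet K, ENNReal.ofReal (dst p k ^ (i+1)) := by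
          apply setLIntegral_mono measurable_const
          intro x hx
          rw [ES_apply]
          exact ENNReal.ofReal_le_ofReal (sgm_le_on hk hp hK hx)
      _ = ENNReal.ofReal (dst p k ^ (i+1)) * volume (ivSet K) := setLIntegral_const _ _
      _ ≤ ENNReal.ofReal (dst p k ^ (i+1) * (2 * rho k + (1/3:ℝ)^0) * len K) := by
          rw [vol_ivSet, ← ENNReal.ofReal_mul (le_of_lt hdp)]
          apply ENNReal.ofReal_le_ofReal
          simp only [pow_zero]
          have hcross : (0:ℝ) ≤ rho k * (dst p k ^ (i+1) * len K) :=
            mul_nonneg (le_of_lt hρ) (mul_nonneg (le_of_lt hdp) (le_of_lt hL))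
          nlinarith [hcross]
  | succ m ih =>
    intro i K hK
    have hL := Kfam_len_pos hk1 hK
    have hN : ((3^(k-1) : ℕ) : ℝ) = (3:ℝ)^(k-1) := by push_cast; ring
    have hρL : (0:ℝ) ≤ rho k * len K := mul_nonneg (le_of_lt hρ) (le_of_lt hL)
    have hdp : (0:ℝ) < dst p k ^ (i+1) := pow_pos hd _
    have hdp2 : (0:ℝ) < dst p k ^ (i+2) := pow_pos hd _
    have ht0 : (0:ℝ) ≤ (1/3:ℝ)^m := by positivity
    have h2t : (0:ℝ) ≤ 2 * rho k + (1/3:ℝ)^m := by linarith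
    rw [lint_split hk1 hK _]
    have houter : ∫⁻ x in ivSet K \ ivSet (mid K), ES p k ch x
        ≤ ENNReal.ofReal (dst p k ^ (i+1) * (rho k * len K)) := by
      rw [lint_ES_outer hk hK, vol_ivSet, IJ_mid_len hK,
        ← ENNReal.ofReal_mul (le_of_lt hdp)]
    have hchild : ∀ j ∈ Finset.range (3^(k-1)),
        ∫⁻ x in ivSet (chI k K j), ES p k ch x
          ≤ ENNReal.ofReal (dst p k ^ (i+2) * (2 * rho k + (1/3:ℝ)^m) * (rho k * len K)) := by
      intro j hj
      have hmem := chI_mem hk1 hK (Finset.mem_range.mp hj)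
      have := ih (i+1) _ hmem
      rw [len_chI] at this
      exact this
    have hBnn : (0:ℝ) ≤ dst p k ^ (i+2) * (2 * rho k + (1/3:ℝ)^m) * (rho k * len K) :=
      mul_nonneg (mul_nonneg (le_of_lt hdp2) h2t) hρL
    have hsum : ∑ j ∈ Finset.range (3^(k-1)), ∫⁻ x in ivSet (chI k K j), ES p k ch x
        ≤ ENNReal.ofReal ((3:ℝ)^(k-1)
            * (dst p k ^ (i+2) * (2 * rho k + (1/3:ℝ)^m) * (rho k * len K))) := by
      calc ∑ j ∈ Finset.range (3^(k-1)), ∫⁻ x in ivSet (chI k K j), ES p k ch x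
          ≤ ∑ _j ∈ Finset.range (3^(k-1)), ENNReal.ofReal
              (dst p k ^ (i+2) * (2 * rho k + (1/3:ℝ)^m) * (rho k * len K)) :=
            Finset.sum_le_sum hchild
        _ = ENNReal.ofReal ((3:ℝ)^(k-1)
              * (dst p k ^ (i+2) * (2 * rho k + (1/3:ℝ)^m) * (rho k * len K))) := by
            rw [Finset.sum_const, Finset.card_range, nsmul_eq_mul,
              ← ENNReal.ofReal_natCast (3^(k-1)), hN,
              ← ENNReal.ofReal_mul (by positivity : (0:ℝ) ≤ (3:ℝ)^(k-1))]
    calc (∫⁻ x in ivSet K \ ivSet (mid K), ES p k ch x)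
          + ∑ j ∈ Finset.range (3^(k-1)), ∫⁻ x in ivSet (chI k K j), ES p k ch x
        ≤ ENNReal.ofReal (dst p k ^ (i+1) * (rho k * len K))
          + ENNReal.ofReal ((3:ℝ)^(k-1)
              * (dst p k ^ (i+2) * (2 * rho k + (1/3:ℝ)^m) * (rho k * len K))) :=
          add_le_add houter hsum
      _ ≤ ENNReal.ofReal (dst p k ^ (i+1) * (2 * rho k + (1/3:ℝ)^(m+1)) * len K) := by
          rw [← ENNReal.ofReal_add (mul_nonneg (le_of_lt hdp) hρL)
            (mul_nonneg (by positivity : (0:ℝ) ≤ (3:ℝ)^(k-1)) hBnn)]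
          apply ENNReal.ofReal_le_ofReal
          have h1 := threek_rho (k := k) hk1
          have hdm : dst p k ^ (i+2) = dst p k ^ (i+1) * dst p k := pow_succ _ _
          have hps : (1/3:ℝ)^(m+1) = (1/3:ℝ)^m * (1/3:ℝ) := pow_succ _ _
          have hmul : dst p k * (2 * rho k + (1/3:ℝ)^m) ≤ 2 * rho k + (1/3:ℝ)^m :=
            mul_le_of_le_one_left h2t hd1
          have hcoef : rho k + dst p k * (2 * rho k + (1/3:ℝ)^m) * (1/3:ℝ)
              ≤ 2 * rho k + (1/3:ℝ)^m * (1/3:ℝ) := by linarith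
          have hDL : (0:ℝ) ≤ dst p k ^ (i+1) * len K :=
            mul_nonneg (le_of_lt hdp) (le_of_lt hL)
          have heq : dst p k ^ (i+1) * (rho k * len K)
              + (3:ℝ)^(k-1) * (dst p k ^ (i+2) * (2 * rho k + (1/3:ℝ)^m) * (rho k * len K))
              = (dst p k ^ (i+1) * len K)
                * (rho k + dst p k * (2 * rho k + (1/3:ℝ)^m) * (1/3:ℝ)) := by
            rw [hdm]
            linear_combination (dst p k ^ (i+1) * dst p k * (2 * rho k + (1/3:ℝ)^m) * len K) * h1
          rw [hps, heq]
          nlinarith [mul_le_mul_of_nonneg_left hcoef hDL]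

lemma lint_ES_le (hk : 3 ≤ k) (hp : 1 < p) {i : ℕ} {K : ℝ × ℝ} (hK : K ∈ Kfam k i) :
    ∫⁻ x in ivSet K, ES p k ch x
      ≤ ENNReal.ofReal (dst p k ^ (i+1) * (2 * rho k) * len K) := by
  have hpow := tendsto_pow_atTop_nhds_zero_of_lt_one (by norm_num : (0:ℝ) ≤ 1/3)
    (by norm_num : (1/3:ℝ) < 1)
  have hlim : Tendsto (fun m : ℕ =>
      ENNReal.ofReal (dst p k ^ (i+1) * (2 * rho k + (1/3:ℝ)^m) * len K)) atTop
      (𝓝 (ENNReal.ofReal (dst p k ^ (i+1) * (2 * rho k) * len K))) := by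
    apply ENNReal.tendsto_ofReal
    have hre := ((hpow.const_add (2 * rho k)).const_mul (dst p k ^ (i+1))).mul_const (len K)
    simpa using hre
  exact ge_of_tendsto' hlim (fun m => lint_ES_upper hk hp m i K hK)

lemma lint_ES_ge (hk : 3 ≤ k) {i : ℕ} {K : ℝ × ℝ} (hK : K ∈ Kfam k i) :
    ENNReal.ofReal (dst p k ^ (i+1) * (rho k * len K)) ≤ ∫⁻ x in ivSet K, ES p k ch x := by
  have hd := dst_pos (p := p) (k := k)
  calc ENNReal.ofReal (dst p k ^ (i+1) * (rho k * len K))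
      = ∫⁻ x in ivSet (IJ k ch (mid K)), ES p k ch x := by
        rw [lint_ES_IJ hk hK subset_rfl (ivSet_measurable _), vol_ivSet, IJ_mid_len hK,
          ← ENNReal.ofReal_mul (le_of_lt (pow_pos hd _))]
    _ ≤ ∫⁻ x in ivSet K, ES p k ch x := lintegral_mono_set (IJ_mid_subset hk hK)

/-! ### outer identity on subsets, window bound, margin-length bound -/

lemma lint_EW_outer' (hk : 3 ≤ k) {i : ℕ} {K : ℝ × ℝ} (hKi : K ∈ Kfam k i) {T : Set ℝ}
    (hT : T ⊆ ivSet K \ ivSet (mid K)) (hTm : MeasurableSet T) :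
    ∫⁻ x in T, EW k ch x
      = ENNReal.ofReal (cst k ^ (i+1)) * volume (T ∩ ivSet (IJ k ch (mid K))) := by
  have hcong : ∀ x ∈ T, EW k ch x
      = Set.indicator (ivSet (IJ k ch (mid K)))
          (fun _ => ENNReal.ofReal (cst k ^ (i+1))) x := by
    intro x hx
    rw [EW_apply, wgt_outer hk hKi (hT hx).1 (hT hx).2]
    by_cases hmem : x ∈ ivSet (IJ k ch (mid K))
    · rw [Set.indicator_of_mem hmem, Set.indicator_of_mem hmem]
    · rw [Set.indicator_of_notMem hmem, Set.indicator_of_notMem hmem, ENNReal.ofReal_zero]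
  rw [setLIntegral_congr_fun hTm hcong,
    lintegral_indicator (ivSet_measurable _), setLIntegral_const,
    Measure.restrict_apply (ivSet_measurable _), Set.inter_comm]

lemma lint_ES_outer' (hk : 3 ≤ k) {i : ℕ} {K : ℝ × ℝ} (hKi : K ∈ Kfam k i) {T : Set ℝ}
    (hT : T ⊆ ivSet K \ ivSet (mid K)) (hTm : MeasurableSet T) :
    ∫⁻ x in T, ES p k ch x
      = ENNReal.ofReal (dst p k ^ (i+1)) * volume (T ∩ ivSet (IJ k ch (mid K))) := by
  have hcong : ∀ x ∈ T, ES p k ch x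
      = Set.indicator (ivSet (IJ k ch (mid K)))
          (fun _ => ENNReal.ofReal (dst p k ^ (i+1))) x := by
    intro x hx
    rw [ES_apply, sgm_outer hk hKi (hT hx).1 (hT hx).2]
    by_cases hmem : x ∈ ivSet (IJ k ch (mid K))
    · rw [Set.indicator_of_mem hmem, Set.indicator_of_mem hmem]
    · rw [Set.indicator_of_notMem hmem, Set.indicator_of_notMem hmem, ENNReal.ofReal_zero]
  rw [setLIntegral_congr_fun hTm hcong,
    lintegral_indicator (ivSet_measurable _), setLIntegral_const,
    Measure.restrict_apply (ivSet_measurable _), Set.inter_comm]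

lemma lint_window (hk : 3 ≤ k) {i : ℕ} {K : ℝ × ℝ} (hKi : K ∈ Kfam k i)
    (u : ℝ → ℝ≥0∞) {γ : ℝ} (hγ : 0 ≤ γ)
    (hchild : ∀ j, j < 3^(k-1) → ∫⁻ x in ivSet (chI k K j), u x
      ≤ ENNReal.ofReal (γ * (rho k * len K)))
    {a b : ℝ} :
    ∫⁻ x in Ico a b ∩ ivSet (mid K), u x
      ≤ ENNReal.ofReal (γ * (b - a + 2 * (rho k * len K))) := by
  have hk1 : 1 ≤ k := by omega
  have hρ := rho_pos (k := k)
  have hL := Kfam_len_pos hk1 hKi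
  have hρL : (0:ℝ) < rho k * len K := mul_pos hρ hL
  set S := (Finset.range (3^(k-1))).filter
    (fun j => a < (chI k K j).2 ∧ (chI k K j).1 < b) with hSdef
  have hdisj : (↑S : Set ℕ).PairwiseDisjoint (fun j => ivSet (chI k K j)) :=
    fun a' _ b' _ hab => Set.disjoint_iff_inter_eq_empty.mpr
      (chI_disj (le_of_lt hL) hab)
  have hcover : Ico a b ∩ ivSet (mid K) ⊆ ⋃ j ∈ S, ivSet (chI k K j) := by
    rintro x ⟨hxE, hxJ⟩
    rw [← mid_tile hk1 hKi] at hxJ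
    obtain ⟨j, hjr, hxj⟩ := Set.mem_iUnion₂.mp hxJ
    have hx1 : (chI k K j).1 ≤ x := hxj.1
    have hx2 : x < (chI k K j).2 := hxj.2
    have ha : a ≤ x := hxE.1
    have hb : x < b := hxE.2
    have hjS : j ∈ S := by
      rw [hSdef, Finset.mem_filter]
      exact ⟨hjr, by linarith, by linarith⟩
    exact Set.mem_biUnion hjS hxj
  have hsub : (⋃ j ∈ S, ivSet (chI k K j)) ⊆ Ico (a - rho k * len K) (b + rho k * len K) := by
    intro x hx
    obtain ⟨j, hjS, hxj⟩ := Set.mem_iUnion₂.mp hx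
    rw [hSdef, Finset.mem_filter] at hjS
    obtain ⟨-, hj1, hj2⟩ := hjS
    have hlen : (chI k K j).2 - (chI k K j).1 = rho k * len K := len_chI K j
    have hx1 : (chI k K j).1 ≤ x := hxj.1
    have hx2 : x < (chI k K j).2 := hxj.2
    exact ⟨by linarith, by linarith⟩
  have hvol : (S.card : ℝ≥0∞) * ENNReal.ofReal (rho k * len K)
      ≤ ENNReal.ofReal (b - a + 2 * (rho k * len K)) := by
    have hμ : volume (⋃ j ∈ S, ivSet (chI k K j))
        = (S.card : ℝ≥0∞) * ENNReal.ofReal (rho k * len K) := by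
      rw [measure_biUnion_finset hdisj (fun j _ => ivSet_measurable _)]
      rw [Finset.sum_congr rfl (fun j _ => by rw [vol_ivSet, len_chI])]
      rw [Finset.sum_const, nsmul_eq_mul]
    rw [← hμ]
    calc volume (⋃ j ∈ S, ivSet (chI k K j))
        ≤ volume (Ico (a - rho k * len K) (b + rho k * len K)) := measure_mono hsub
      _ = ENNReal.ofReal (b + rho k * len K - (a - rho k * len K)) := Real.volume_Ico
      _ = ENNReal.ofReal (b - a + 2 * (rho k * len K)) := by ring_nf
  calc ∫⁻ x in Ico a b ∩ ivSet (mid K), u x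
      ≤ ∫⁻ x in ⋃ j ∈ S, ivSet (chI k K j), u x := lintegral_mono_set hcover
    _ = ∑ j ∈ S, ∫⁻ x in ivSet (chI k K j), u x :=
        lintegral_biUnion_finset hdisj (fun j _ => ivSet_measurable _) _
    _ ≤ ∑ _j ∈ S, ENNReal.ofReal (γ * (rho k * len K)) :=
        Finset.sum_le_sum (fun j hj => hchild j
          (Finset.mem_range.mp (Finset.mem_filter.mp hj).1))
    _ = (S.card : ℝ≥0∞) * ENNReal.ofReal (γ * (rho k * len K)) := by
        rw [Finset.sum_const, nsmul_eq_mul]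
    _ ≤ ENNReal.ofReal (γ * (b - a + 2 * (rho k * len K))) := by
        rw [ENNReal.ofReal_mul hγ, ENNReal.ofReal_mul hγ, ← mul_assoc,
          mul_comm (S.card : ℝ≥0∞) (ENNReal.ofReal γ), mul_assoc]
        exact mul_le_mul_right hvol _

lemma len_lower (hk : 3 ≤ k) {i : ℕ} {K : ℝ × ℝ} (hKi : K ∈ Kfam k i) {I : ℝ × ℝ}
    (hI : I.1 < I.2) (hmin : ∀ K' ∈ KK k, ivSet I ⊆ ivSet K' → ivSet K ⊆ ivSet K')
    {x : ℝ} (hxI : x ∈ ivSet I) (hxJ : x ∈ ivSet (mid K))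
    (hxw : wgt k ch x ≠ 0) : rho k * len K ≤ 4 * len I := by
  have hk1 : 1 ≤ k := by omega
  have hρ := rho_pos (k := k)
  have hL := Kfam_len_pos hk1 hKi
  have hxJ' := hxJ
  rw [← mid_tile hk1 hKi] at hxJ'
  obtain ⟨j, hjr, hxj⟩ := Set.mem_iUnion₂.mp hxJ'
  have hj : j < 3^(k-1) := Finset.mem_range.mp hjr
  have hK' : chI k K j ∈ Kfam k (i+1) := chI_mem hk1 hKi hj
  obtain ⟨ℓ, P, hP, hxP, -⟩ := (wgt_cases (ch := ch) hk x).resolve_left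
    (fun h => hxw h.1)
  obtain ⟨hm1, hm2⟩ := active_margin hk hK' hP hxj hxP
  have hlenK' : len (chI k K j) = rho k * len K := len_chI K j
  have hnot : ¬ ivSet I ⊆ ivSet (chI k K j) := by
    intro hsub
    have hKsub := hmin (chI k K j) (Set.mem_iUnion.mpr ⟨i+1, hK'⟩) hsub
    obtain ⟨h1, h2⟩ := (Set.Ico_subset_Ico_iff (Kfam_fst_lt_snd hk1 hKi)).mp hKsub
    have hlen : len K ≤ len (chI k K j) := by
      simp only [len] at *
      linarith
    rw [Kfam_len hk1 hKi, Kfam_len hk1 hK'] at hlen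
    have hpi := pow_pos (rho_pos (k := k)) i
    have hr12 := rho_le (k := k) hk
    rw [pow_succ] at hlen
    nlinarith
  obtain ⟨y, hyI, hyn⟩ := Set.not_subset.mp hnot
  rw [ivSet_def, mem_Ico, not_and_or] at hyn
  have hxI1 : I.1 ≤ x := hxI.1
  have hxI2 : x < I.2 := hxI.2
  have hyI1 : I.1 ≤ y := hyI.1
  have hyI2 : y < I.2 := hyI.2
  have hlenI : len I = I.2 - I.1 := rfl
  have hlenK'2 : len (chI k K j) = (chI k K j).2 - (chI k K j).1 := rfl
  rcases hyn with hy1 | hy2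
  · push_neg at hy1
    linarith
  · push_neg at hy2
    linarith

/-! ### average values -/

lemma avg_wgt_IJ (hk : 3 ≤ k) {i : ℕ} {K : ℝ × ℝ} (hKi : K ∈ Kfam k i) :
    avg (wgt k ch) (IJ k ch (mid K)) = cst k ^ (i+1) := by
  have hk1 : 1 ≤ k := by omega
  have hρL : (0:ℝ) < rho k * len K := mul_pos rho_pos (Kfam_len_pos hk1 hKi)
  have hc := cst_pos (k := k)
  rw [avg, mass_wgt_eq hk, lint_EW_IJ hk hKi subset_rfl (ivSet_measurable _),
    vol_ivSet, IJ_mid_len hKi, ← ENNReal.ofReal_mul (le_of_lt (pow_pos hc _)),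
    ENNReal.toReal_ofReal (mul_nonneg (le_of_lt (pow_pos hc _)) (le_of_lt hρL))]
  exact mul_div_cancel_right₀ _ (ne_of_gt hρL)

lemma avg_sgm_IJ (hk : 3 ≤ k) {i : ℕ} {K : ℝ × ℝ} (hKi : K ∈ Kfam k i) :
    avg (sgm p k ch) (IJ k ch (mid K)) = dst p k ^ (i+1) := by
  have hk1 : 1 ≤ k := by omega
  have hρL : (0:ℝ) < rho k * len K := mul_pos rho_pos (Kfam_len_pos hk1 hKi)
  have hd := dst_pos (p := p) (k := k)
  rw [avg, mass_sgm_eq hk, lint_ES_IJ hk hKi subset_rfl (ivSet_measurable _),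
    vol_ivSet, IJ_mid_len hKi, ← ENNReal.ofReal_mul (le_of_lt (pow_pos hd _)),
    ENNReal.toReal_ofReal (mul_nonneg (le_of_lt (pow_pos hd _)) (le_of_lt hρL))]
  exact mul_div_cancel_right₀ _ (ne_of_gt hρL)

lemma avg_wgt_K (hk : 3 ≤ k) {i : ℕ} {K : ℝ × ℝ} (hKi : K ∈ Kfam k i) :
    avg (wgt k ch) K = cst k ^ i := by
  have hk1 : 1 ≤ k := by omega
  have hL := Kfam_len_pos hk1 hKi
  have hc := cst_pos (k := k)
  rw [avg, mass_wgt_eq hk, lint_EW_eq hk hKi,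
    ENNReal.toReal_ofReal (mul_nonneg (le_of_lt (pow_pos hc _)) (le_of_lt hL))]
  exact mul_div_cancel_right₀ _ (ne_of_gt hL)

lemma avg_sgm_K_ge (hk : 3 ≤ k) (hp : 1 < p) {i : ℕ} {K : ℝ × ℝ} (hKi : K ∈ Kfam k i) :
    dst p k ^ (i+1) * rho k ≤ avg (sgm p k ch) K := by
  have hk1 : 1 ≤ k := by omega
  have hL := Kfam_len_pos hk1 hKi
  have hd := dst_pos (p := p) (k := k)
  have hρ := rho_pos (k := k)
  have hfin : ∫⁻ x in ivSet K, ES p k ch x ≠ ⊤ :=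
    ne_top_of_le_ne_top ENNReal.ofReal_ne_top (lint_ES_le hk hp hKi)
  have hge := lint_ES_ge (ch := ch) (p := p) hk hKi
  have hto := ENNReal.toReal_mono hfin hge
  rw [ENNReal.toReal_ofReal
    (mul_nonneg (le_of_lt (pow_pos hd _)) (mul_nonneg (le_of_lt hρ) (le_of_lt hL)))] at hto
  rw [avg, mass_sgm_eq hk, le_div_iff₀ hL]
  calc dst p k ^ (i+1) * rho k * len K = dst p k ^ (i+1) * (rho k * len K) := by ring
    _ ≤ _ := hto

end Aux

/-- Lemma 3.2 of the paper: estimates of averages of `w_k`, `σ_k` over a general subinterval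
`I` of `[0,1)` in terms of the smallest interval `K ∈ 𝐊` containing `I` (with `J := K^m`). -/
theorem statement1 (p : ℝ) (hp : 1 < p) :
    ∃ C : ℝ, 0 < C ∧ ∀ k : ℕ, 3000 < k → ∀ ch : ℝ × ℝ → Bool,
      ∀ I : ℝ × ℝ, 0 ≤ I.1 → I.1 < I.2 → I.2 ≤ 1 →
      ∀ K ∈ KK k, ivSet I ⊆ ivSet K →
        (∀ K' ∈ KK k, ivSet I ⊆ ivSet K' → ivSet K ⊆ ivSet K') →
        ((ivSet I ∩ ivSet (mid K) = ∅ →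
            avg (wgt k ch) I ≤ avg (wgt k ch) (IJ k ch (mid K)) ∧
            avg (sgm p k ch) I ≤ avg (sgm p k ch) (IJ k ch (mid K))) ∧
         ((ivSet I ∩ ivSet (mid K)).Nonempty →
            ivSet I ∩ ivSet (IJ k ch (mid K)) = ∅ →
            avg (wgt k ch) I ≤ C * avg (wgt k ch) K ∧
            avg (sgm p k ch) I ≤ C * avg (sgm p k ch) K) ∧
         ((ivSet I ∩ ivSet (mid K)).Nonempty →
            (ivSet I ∩ ivSet (IJ k ch (mid K))).Nonempty →
            avg (wgt k ch) I ≤ C * avg (wgt k ch) (IJ k ch (mid K)) ∧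
            avg (sgm p k ch) I ≤
              C * max ((volume (ivSet I ∩ ivSet (IJ k ch (mid K)))).toReal / len I)
                    ((3 : ℝ) ^ (-(k : ℤ))) * avg (sgm p k ch) (IJ k ch (mid K)) ∧
            C * max ((volume (ivSet I ∩ ivSet (IJ k ch (mid K)))).toReal / len I)
                  ((3 : ℝ) ^ (-(k : ℤ))) * avg (sgm p k ch) (IJ k ch (mid K)) ≤
              C * (len (IJ k ch (mid K)) / len I) * avg (sgm p k ch) (IJ k ch (mid K)))) := by
  refine ⟨100, by norm_num, ?_⟩
  intro k hk3000 ch I hI0 hI12 hI2 K hKK hIK hmin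
  have hk : 3 ≤ k := by omega
  have hk1 : 1 ≤ k := by omega
  obtain ⟨i, hKi⟩ := Set.mem_iUnion.mp hKK
  have hρ : 0 < rho k := rho_pos
  have hc : 0 < cst k := cst_pos
  have hc1 := one_lt_cst (k := k) hk1
  have hc3 := cst_lt_three (k := k) hk1
  have hd : 0 < dst p k := dst_pos
  have hd1 := dst_le_one (p := p) (k := k) hk1 hp
  have hL : 0 < len K := Kfam_len_pos hk1 hKi
  have hlenI : 0 < len I := by
    have h : len I = I.2 - I.1 := rfl
    linarith
  have hρL : 0 < rho k * len K := mul_pos hρ hL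
  have hdp : (0:ℝ) < dst p k ^ (i+1) := pow_pos hd _
  have hcp : (0:ℝ) < cst k ^ (i+1) := pow_pos hc _
  have hlenW : len (IJ k ch (mid K)) = rho k * len K := IJ_mid_len hKi
  have hIlenK : len I ≤ len K := by
    obtain ⟨h1, h2⟩ := (Set.Ico_subset_Ico_iff hI12).mp hIK
    have e1 : len I = I.2 - I.1 := rfl
    have e2 : len K = K.2 - K.1 := rfl
    linarith
  have hWfin : volume (ivSet I ∩ ivSet (IJ k ch (mid K))) ≠ ⊤ :=
    ne_top_of_le_ne_top (by rw [vol_ivSet]; exact ENNReal.ofReal_ne_top)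
      (measure_mono Set.inter_subset_right)
  set v : ℝ := (volume (ivSet I ∩ ivSet (IJ k ch (mid K)))).toReal with hvdef
  have hv0 : 0 ≤ v := ENNReal.toReal_nonneg
  have hvI : v ≤ len I :=
    ENNReal.toReal_le_of_le_ofReal (le_of_lt hlenI)
      (le_trans (measure_mono Set.inter_subset_left) (le_of_eq (vol_ivSet I)))
  have hvW : v ≤ rho k * len K := by
    apply ENNReal.toReal_le_of_le_ofReal (le_of_lt hρL)
    calc volume (ivSet I ∩ ivSet (IJ k ch (mid K)))
        ≤ volume (ivSet (IJ k ch (mid K))) := measure_mono Set.inter_subset_right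
      _ = ENNReal.ofReal (rho k * len K) := by rw [vol_ivSet, hlenW]
  have hvol_eq : volume (ivSet I ∩ ivSet (IJ k ch (mid K))) = ENNReal.ofReal v :=
    (ENNReal.ofReal_toReal hWfin).symm
  have havgwIJ := avg_wgt_IJ (ch := ch) hk hKi
  have havgsIJ := avg_sgm_IJ (ch := ch) (p := p) hk hKi
  have havgwK := avg_wgt_K (ch := ch) hk hKi
  have havgsK := avg_sgm_K_ge (ch := ch) hk hp hKi
  have hdisjIJ : Disjoint (ivSet I ∩ ivSet (mid K)) (ivSet I \ ivSet (mid K)) := by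
    apply Set.disjoint_left.mpr
    rintro x ⟨-, hxJ⟩ ⟨-, hxJ'⟩
    exact hxJ' hxJ
  have hIsplit : ∀ u : ℝ → ℝ≥0∞, ∫⁻ x in ivSet I, u x
      = (∫⁻ x in ivSet I ∩ ivSet (mid K), u x)
        + ∫⁻ x in ivSet I \ ivSet (mid K), u x := by
    intro u
    conv_lhs => rw [← Set.inter_union_diff (ivSet I) (ivSet (mid K))]
    exact lintegral_union ((ivSet_measurable I).diff (ivSet_measurable (mid K))) hdisjIJ
  have hIdiff_sub : ivSet I \ ivSet (mid K) ⊆ ivSet K \ ivSet (mid K) :=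
    fun x hx => ⟨hIK hx.1, hx.2⟩
  have hintW : (ivSet I \ ivSet (mid K)) ∩ ivSet (IJ k ch (mid K))
      = ivSet I ∩ ivSet (IJ k ch (mid K)) := by
    ext x
    constructor
    · rintro ⟨⟨h1, -⟩, h2⟩
      exact ⟨h1, h2⟩
    · rintro ⟨h1, h2⟩
      refine ⟨⟨h1, fun hxJ => ?_⟩, h2⟩
      have hmem : x ∈ ivSet (IJ k ch (mid K)) ∩ ivSet (mid K) := ⟨h2, hxJ⟩
      rw [IJ_mid_disj] at hmem
      exact hmem
  have houterW : ∫⁻ x in ivSet I \ ivSet (mid K), EW k ch x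
      = ENNReal.ofReal (cst k ^ (i+1)) * ENNReal.ofReal v := by
    rw [lint_EW_outer' hk hKi hIdiff_sub
      ((ivSet_measurable I).diff (ivSet_measurable (mid K))), hintW, hvol_eq]
  have houterS : ∫⁻ x in ivSet I \ ivSet (mid K), ES p k ch x
      = ENNReal.ofReal (dst p k ^ (i+1)) * ENNReal.ofReal v := by
    rw [lint_ES_outer' hk hKi hIdiff_sub
      ((ivSet_measurable I).diff (ivSet_measurable (mid K))), hintW, hvol_eq]
  have hJmeas : MeasurableSet (ivSet I ∩ ivSet (mid K)) :=
    (ivSet_measurable I).inter (ivSet_measurable (mid K))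
  have hJw : ∫⁻ x in ivSet I ∩ ivSet (mid K), EW k ch x
      ≤ ENNReal.ofReal (cst k ^ (i+1) * (9 * len I)) ∧
      ∫⁻ x in ivSet I ∩ ivSet (mid K), ES p k ch x
      ≤ ENNReal.ofReal (dst p k ^ (i+1) * rho k * (18 * len I)) := by
    by_cases hsupp : ∃ x ∈ ivSet I ∩ ivSet (mid K), wgt k ch x ≠ 0
    · obtain ⟨x, ⟨hxI, hxJ⟩, hxw⟩ := hsupp
      have hwin := len_lower (ch := ch) hk hKi hI12 hmin hxI hxJ hxw
      have hlenIe : len I = I.2 - I.1 := rfl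
      constructor
      · calc ∫⁻ x in ivSet I ∩ ivSet (mid K), EW k ch x
            ≤ ENNReal.ofReal (cst k ^ (i+1) * (I.2 - I.1 + 2 * (rho k * len K))) := by
              apply lint_window hk hKi _ (le_of_lt hcp)
              intro j hj
              rw [lint_EW_eq hk (chI_mem hk1 hKi hj), len_chI]
          _ ≤ ENNReal.ofReal (cst k ^ (i+1) * (9 * len I)) := by
              apply ENNReal.ofReal_le_ofReal
              apply mul_le_mul_of_nonneg_left _ (le_of_lt hcp)
              linarith
      · calc ∫⁻ x in ivSet I ∩ ivSet (mid K), ES p k ch x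
            ≤ ENNReal.ofReal (dst p k ^ (i+2) * (2 * rho k)
                * (I.2 - I.1 + 2 * (rho k * len K))) := by
              apply lint_window hk hKi _
                (mul_nonneg (le_of_lt (pow_pos hd _)) (by linarith))
              intro j hj
              have h := lint_ES_le (ch := ch) hk hp (chI_mem hk1 hKi hj)
              rw [len_chI] at h
              exact h
          _ ≤ ENNReal.ofReal (dst p k ^ (i+1) * rho k * (18 * len I)) := by
              apply ENNReal.ofReal_le_ofReal
              have hd2 : dst p k ^ (i+2) = dst p k ^ (i+1) * dst p k := pow_succ _ _
              have h9 : I.2 - I.1 + 2 * (rho k * len K) ≤ 9 * len I := by linarith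
              have hdd : dst p k ^ (i+2) ≤ dst p k ^ (i+1) := by
                rw [hd2]
                nlinarith
              calc dst p k ^ (i+2) * (2 * rho k) * (I.2 - I.1 + 2 * (rho k * len K))
                  ≤ dst p k ^ (i+1) * (2 * rho k) * (9 * len I) := by
                    apply mul_le_mul
                    · exact mul_le_mul_of_nonneg_right hdd (by linarith)
                    · exact h9
                    · linarith
                    · exact mul_nonneg (le_of_lt hdp) (by linarith)
                _ = dst p k ^ (i+1) * rho k * (18 * len I) := by ring
    · push_neg at hsupp
      constructor
      · rw [setLIntegral_congr_fun hJmeas (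
          (fun x hx => by rw [EW_apply, hsupp x hx, ENNReal.ofReal_zero] :
            ∀ x ∈ ivSet I ∩ ivSet (mid K), EW k ch x = (fun _ => (0:ℝ≥0∞)) x))]
        simp
      · rw [setLIntegral_congr_fun hJmeas (
          (fun x hx => by
            rw [ES_apply, sgm_eq_zero_of_wgt (hsupp x hx), ENNReal.ofReal_zero] :
            ∀ x ∈ ivSet I ∩ ivSet (mid K), ES p k ch x = (fun _ => (0:ℝ≥0∞)) x))]
        simp
  have hmassW : mass (wgt k ch) I ≤ cst k ^ (i+1) * (9 * len I) + cst k ^ (i+1) * v := by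
    rw [mass_wgt_eq hk, hIsplit, houterW]
    apply ENNReal.toReal_le_of_le_ofReal
      (add_nonneg (mul_nonneg (le_of_lt hcp) (by linarith)) (mul_nonneg (le_of_lt hcp) hv0))
    calc (∫⁻ x in ivSet I ∩ ivSet (mid K), EW k ch x)
          + ENNReal.ofReal (cst k ^ (i+1)) * ENNReal.ofReal v
        ≤ ENNReal.ofReal (cst k ^ (i+1) * (9 * len I))
          + ENNReal.ofReal (cst k ^ (i+1) * v) :=
          add_le_add hJw.1 (le_of_eq (ENNReal.ofReal_mul (le_of_lt hcp)).symm)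
      _ = ENNReal.ofReal (cst k ^ (i+1) * (9 * len I) + cst k ^ (i+1) * v) :=
          (ENNReal.ofReal_add (mul_nonneg (le_of_lt hcp) (by linarith))
            (mul_nonneg (le_of_lt hcp) hv0)).symm
  have hmassS : mass (sgm p k ch) I
      ≤ dst p k ^ (i+1) * rho k * (18 * len I) + dst p k ^ (i+1) * v := by
    rw [mass_sgm_eq hk, hIsplit, houterS]
    apply ENNReal.toReal_le_of_le_ofReal
      (add_nonneg (mul_nonneg (mul_nonneg (le_of_lt hdp) (le_of_lt hρ)) (by linarith))
        (mul_nonneg (le_of_lt hdp) hv0))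
    calc (∫⁻ x in ivSet I ∩ ivSet (mid K), ES p k ch x)
          + ENNReal.ofReal (dst p k ^ (i+1)) * ENNReal.ofReal v
        ≤ ENNReal.ofReal (dst p k ^ (i+1) * rho k * (18 * len I))
          + ENNReal.ofReal (dst p k ^ (i+1) * v) :=
          add_le_add hJw.2 (le_of_eq (ENNReal.ofReal_mul (le_of_lt hdp)).symm)
      _ = ENNReal.ofReal (dst p k ^ (i+1) * rho k * (18 * len I) + dst p k ^ (i+1) * v) :=
          (ENNReal.ofReal_add
            (mul_nonneg (mul_nonneg (le_of_lt hdp) (le_of_lt hρ)) (by linarith))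
            (mul_nonneg (le_of_lt hdp) hv0)).symm
  refine ⟨?_, ?_, ?_⟩
  · -- case (a)
    intro hIJe
    have hIsub : ivSet I ⊆ ivSet K \ ivSet (mid K) := by
      intro x hx
      refine ⟨hIK hx, fun hxJ => ?_⟩
      have hmem : x ∈ ivSet I ∩ ivSet (mid K) := ⟨hx, hxJ⟩
      rw [hIJe] at hmem
      exact hmem
    have hmw : mass (wgt k ch) I = cst k ^ (i+1) * v := by
      rw [mass_wgt_eq hk, lint_EW_outer' hk hKi hIsub (ivSet_measurable I), hvol_eq,
        ← ENNReal.ofReal_mul (le_of_lt hcp),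
        ENNReal.toReal_ofReal (mul_nonneg (le_of_lt hcp) hv0)]
    have hms : mass (sgm p k ch) I = dst p k ^ (i+1) * v := by
      rw [mass_sgm_eq hk, lint_ES_outer' hk hKi hIsub (ivSet_measurable I), hvol_eq,
        ← ENNReal.ofReal_mul (le_of_lt hdp),
        ENNReal.toReal_ofReal (mul_nonneg (le_of_lt hdp) hv0)]
    constructor
    · rw [avg, hmw, havgwIJ, div_le_iff₀ hlenI]
      exact mul_le_mul_of_nonneg_left hvI (le_of_lt hcp)
    · rw [avg, hms, havgsIJ, div_le_iff₀ hlenI]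
      exact mul_le_mul_of_nonneg_left hvI (le_of_lt hdp)
  · -- case (b)
    intro hne hWe
    have hveq : v = 0 := by
      rw [hvdef, hWe]
      simp
    rw [hveq] at hmassW hmassS
    constructor
    · rw [avg, havgwK, div_le_iff₀ hlenI]
      have hpi : (0:ℝ) < cst k ^ i := pow_pos hc i
      have hX : (0:ℝ) ≤ cst k ^ i * len I := le_of_lt (mul_pos hpi hlenI)
      calc mass (wgt k ch) I
          ≤ cst k ^ (i+1) * (9 * len I) + cst k ^ (i+1) * 0 := hmassW
        _ = 9 * cst k * (cst k ^ i * len I) := by rw [pow_succ]; ring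
        _ ≤ 100 * (cst k ^ i * len I) :=
            mul_le_mul_of_nonneg_right (by linarith) hX
        _ = 100 * cst k ^ i * len I := by ring
    · rw [avg, div_le_iff₀ hlenI]
      have h2 : 0 ≤ avg (sgm p k ch) K := le_trans (le_of_lt (mul_pos hdp hρ)) havgsK
      calc mass (sgm p k ch) I
          ≤ dst p k ^ (i+1) * rho k * (18 * len I) + dst p k ^ (i+1) * 0 := hmassS
        _ = 18 * (dst p k ^ (i+1) * rho k) * len I := by ring
        _ ≤ 18 * avg (sgm p k ch) K * len I := by
            apply mul_le_mul_of_nonneg_right _ (le_of_lt hlenI)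
            exact mul_le_mul_of_nonneg_left havgsK (by norm_num)
        _ ≤ 100 * avg (sgm p k ch) K * len I := by
            apply mul_le_mul_of_nonneg_right _ (le_of_lt hlenI)
            exact mul_le_mul_of_nonneg_right (by norm_num) h2
  · -- case (c)
    intro hne hWne
    have hrr : (3:ℝ) ^ (-(k:ℤ)) = rho k := rfl
    refine ⟨?_, ?_, ?_⟩
    · rw [avg, havgwIJ, div_le_iff₀ hlenI]
      have hX : (0:ℝ) ≤ cst k ^ (i+1) * len I := le_of_lt (mul_pos hcp hlenI)
      calc mass (wgt k ch) I
          ≤ cst k ^ (i+1) * (9 * len I) + cst k ^ (i+1) * v := hmassW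
        _ ≤ cst k ^ (i+1) * (9 * len I) + cst k ^ (i+1) * len I :=
            add_le_add le_rfl (mul_le_mul_of_nonneg_left hvI (le_of_lt hcp))
        _ = 10 * (cst k ^ (i+1) * len I) := by ring
        _ ≤ 100 * (cst k ^ (i+1) * len I) := mul_le_mul_of_nonneg_right (by norm_num) hX
        _ = 100 * cst k ^ (i+1) * len I := by ring
    · rw [avg, havgsIJ, hrr, div_le_iff₀ hlenI]
      set M := max (v / len I) (rho k) with hMdef
      have hρM : rho k ≤ M := le_max_right _ _
      have hvM : v ≤ M * len I := (div_le_iff₀ hlenI).mp (le_max_left _ _)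
      have hM0 : 0 ≤ M := le_trans (le_of_lt hρ) hρM
      have e1 : dst p k ^ (i+1) * rho k * (18 * len I)
          ≤ dst p k ^ (i+1) * M * (18 * len I) := by
        apply mul_le_mul_of_nonneg_right _ (by linarith)
        exact mul_le_mul_of_nonneg_left hρM (le_of_lt hdp)
      have e2 : dst p k ^ (i+1) * v ≤ dst p k ^ (i+1) * (M * len I) :=
        mul_le_mul_of_nonneg_left hvM (le_of_lt hdp)
      have hMD : 0 ≤ dst p k ^ (i+1) * M * len I :=
        mul_nonneg (mul_nonneg (le_of_lt hdp) hM0) (le_of_lt hlenI)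
      calc mass (sgm p k ch) I
          ≤ dst p k ^ (i+1) * rho k * (18 * len I) + dst p k ^ (i+1) * v := hmassS
        _ ≤ dst p k ^ (i+1) * M * (18 * len I) + dst p k ^ (i+1) * (M * len I) :=
            add_le_add e1 e2
        _ = 19 * (dst p k ^ (i+1) * M * len I) := by ring
        _ ≤ 100 * (dst p k ^ (i+1) * M * len I) :=
            mul_le_mul_of_nonneg_right (by norm_num) hMD
        _ = 100 * M * dst p k ^ (i+1) * len I := by ring
    · rw [havgsIJ, hrr, hlenW]
      have hmaxle : max (v / len I) (rho k) ≤ rho k * len K / len I := by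
        apply max_le
        · rw [div_le_div_iff₀ hlenI hlenI]
          exact mul_le_mul_of_nonneg_right hvW (le_of_lt hlenI)
        · rw [le_div_iff₀ hlenI]
          exact mul_le_mul_of_nonneg_left hIlenK (le_of_lt hρ)
      have h0 : (0:ℝ) ≤ 100 * dst p k ^ (i+1) :=
        mul_nonneg (by norm_num) (le_of_lt hdp)
      calc 100 * max (v / len I) (rho k) * dst p k ^ (i+1)
          = max (v / len I) (rho k) * (100 * dst p k ^ (i+1)) := by ring
        _ ≤ (rho k * len K / len I) * (100 * dst p k ^ (i+1)) :=
            mul_le_mul_of_nonneg_right hmaxle h0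
        _ = 100 * (rho k * len K / len I) * dst p k ^ (i+1) := by ring

end RTpaper
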